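/- arXiv:2405.07476 — 6 statements merged into one kernel-verified Lean document; each statement's English description precedes it below -/
import Mathlib

section
/- Let X be a metric space, f : X → ℝ² a map, and ν a Borel measure on X. Let W ⊂ X be a compact set such that ν(W) = 0, ν(N_{δ₀}(W)) < ∞ for some δ₀ > 0, and m₂(f(B̄(x,r))) ≤ ν(B̄(x,r)) for every x ∈ W and every 0 < r < δ₀. Then H²({x ∈ W : J_f(x) > 0}) = 0 (H² applied as an outer measure); in particular J_f(x) = 0 for H²-almost every x ∈ W. -/
open MeasureTheory Metric Set Filter
open scoped ENNReal NNReal Topology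

/-- The generalized Jacobian `J_f(x) = limsup_{r→0+} m₂(f(B̄(x,r)))/(π r²)`, where `m₂` is
the 2-dimensional Lebesgue (outer) measure on `ℝ²` and `B̄(x,r)` is the closed ball. -/
noncomputable def jacobianJ {X : Type*} [MetricSpace X]
    (f : X → EuclideanSpace ℝ (Fin 2)) (x : X) : ℝ≥0∞ :=
  Filter.limsup
    (fun r : ℝ => volume (f '' Metric.closedBall x r) / ENNReal.ofReal (Real.pi * r ^ 2))
    (𝓝[>] (0 : ℝ))

lemma jacobian_key_lemma
    {X : Type*} [MetricSpace X] [MeasurableSpace X] [BorelSpace X]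
    (f : X → EuclideanSpace ℝ (Fin 2)) (ν : Measure X)
    (W : Set X) (hW : IsCompact W) (hν0 : ν W = 0)
    (δ₀ : ℝ) (hδ₀ : 0 < δ₀) (hνfin : ν (cthickening δ₀ W) < ∞)
    (hbound : ∀ x ∈ W, ∀ r : ℝ, 0 < r → r < δ₀ →
      volume (f '' closedBall x r) ≤ ν (closedBall x r))
    (ε : ℝ≥0∞) (hε0 : 0 < ε) (hεt : ε ≠ ⊤) :
    μH[2] {x ∈ W | ε < jacobianJ f x} = 0 := by
  set S := {x ∈ W | ε < jacobianJ f x} with hSdef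
  have hSW : S ⊆ W := fun x hx => hx.1
  -- Step A: at every point of `S`, arbitrarily small good radii exist.
  have stepA : ∀ x ∈ S, ∀ δ : ℝ, 0 < δ → ∃ r : ℝ, 0 < r ∧ r < δ ∧
      ε * ENNReal.ofReal (Real.pi * r ^ 2) < volume (f '' closedBall x r) := by
    rintro x ⟨hxW, hxJ⟩ δ hδ
    rw [jacobianJ, Filter.limsup_eq_iInf_iSup] at hxJ
    have h1 : ε < ⨆ r ∈ Ioo (0:ℝ) δ,
        volume (f '' closedBall x r) / ENNReal.ofReal (Real.pi * r ^ 2) :=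
      lt_of_lt_of_le hxJ (iInf₂_le _ (Ioo_mem_nhdsGT_of_mem ⟨le_refl _, hδ⟩))
    rw [lt_iSup_iff] at h1
    obtain ⟨r, hr⟩ := h1
    rw [lt_iSup_iff] at hr
    obtain ⟨hrI, hr⟩ := hr
    have hπ : (0:ℝ) < Real.pi * r ^ 2 :=
      mul_pos Real.pi_pos (pow_pos hrI.1 2)
    refine ⟨r, hrI.1, hrI.2, ?_⟩
    rw [ENNReal.lt_div_iff_mul_lt (Or.inl ?_) (Or.inl ?_)] at hr
    · exact hr
    · exact (ENNReal.ofReal_pos.2 hπ).ne'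
    · exact ENNReal.ofReal_ne_top
  -- the sequence of scales
  set δn : ℕ → ℝ := fun n => δ₀ / (n + 2) with hδn
  have hδnpos : ∀ n, 0 < δn n := fun n => by positivity
  have hδnlt : ∀ n, δn n < δ₀ := by
    intro n
    rw [hδn]
    rw [div_lt_iff₀ (by positivity)]
    nlinarith [Nat.cast_nonneg (α := ℝ) n]
  have hδn0 : Filter.Tendsto δn Filter.atTop (𝓝 0) := by
    refine Filter.Tendsto.congr (fun n => ?_)
      ((tendsto_const_div_atTop_nhds_zero_nat δ₀).comp (Filter.tendsto_add_atTop_nat 2))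
    show δ₀ / ((n + 2 : ℕ) : ℝ) = δn n
    rw [hδn]
    push_cast
    ring
  -- choose radii
  have hex : ∀ n : ℕ, ∀ x, x ∈ S → ∃ r : ℝ, 0 < r ∧ r < δn n ∧
      ε * ENNReal.ofReal (Real.pi * r ^ 2) < volume (f '' closedBall x r) :=
    fun n x hx => stepA x hx (δn n) (hδnpos n)
  choose! ρ hρ0 hρδ hρv using hex
  -- Vitali covering
  have hvit : ∀ n : ℕ, ∃ u ⊆ S,
      (u.PairwiseDisjoint fun a => closedBall a (ρ n a)) ∧
        ∀ a ∈ S, ∃ b ∈ u, closedBall a (ρ n a) ⊆ closedBall b (4 * ρ n b) := by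
    intro n
    exact Vitali.exists_disjoint_subfamily_covering_enlargement_closedBall S id (ρ n)
      (δn n) (fun a ha => (hρδ n a ha).le) 4 (by norm_num)
  choose u huS hdisj hcov using hvit
  -- basic facts about the balls
  have hball_nu : ∀ n, ∀ b ∈ u n,
      ε * ENNReal.ofReal (Real.pi * ρ n b ^ 2) < ν (closedBall b (ρ n b)) := by
    intro n b hb
    exact lt_of_lt_of_le (hρv n b (huS n hb))
      (hbound b (hSW (huS n hb)) (ρ n b) (hρ0 n b (huS n hb))
        ((hρδ n b (huS n hb)).trans (hδnlt n)))
  have hball_sub : ∀ n, ∀ b ∈ u n, closedBall b (ρ n b) ⊆ cthickening (δn n) W := by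
    intro n b hb x hx
    exact mem_cthickening_of_dist_le x b (δn n) W (hSW (huS n hb))
      (le_trans (mem_closedBall.1 hx) (hρδ n b (huS n hb)).le)
  -- countability of each Vitali family
  have hucount : ∀ n, (u n).Countable := by
    intro n
    have hcnt : Set.Countable {b : u n | 0 < ν (closedBall (b : X) (ρ n (b : X)))} := by
      apply MeasureTheory.Measure.countable_meas_pos_of_disjoint_of_meas_iUnion_ne_top
        (As := fun b : u n => closedBall (b : X) (ρ n (b : X)))
      · exact fun b => measurableSet_closedBall
      · intro i j hij
        exact hdisj n i.2 j.2 (fun h => hij (Subtype.ext h))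
      · refine ne_top_of_le_ne_top hνfin.ne (measure_mono ?_)
        refine iUnion_subset fun b => ?_
        exact (hball_sub n b b.2).trans (cthickening_mono (hδnlt n).le W)
    have : {b : u n | 0 < ν (closedBall (b : X) (ρ n (b : X)))} = Set.univ := by
      ext b
      simp only [mem_setOf_eq, mem_univ, iff_true]
      refine lt_of_le_of_lt (zero_le) (hball_nu n b b.2)
    rw [this] at hcnt
    rw [← Set.countable_coe_iff]
    exact countable_univ_iff.mp hcnt
  haveI : ∀ n, Countable (u n) := fun n => (hucount n).to_subtype
  -- sum of squared radii estimate
  have hsum : ∀ n, ε * ENNReal.ofReal Real.pi *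
      (∑' b : u n, ENNReal.ofReal (ρ n (b : X) ^ 2)) ≤ ν (cthickening (δn n) W) := by
    intro n
    have h1 : ∀ b : u n, ε * ENNReal.ofReal Real.pi * ENNReal.ofReal (ρ n (b : X) ^ 2)
        ≤ ν (closedBall (b : X) (ρ n (b : X))) := by
      intro b
      rw [mul_assoc, ← ENNReal.ofReal_mul Real.pi_nonneg]
      exact (hball_nu n b b.2).le
    calc ε * ENNReal.ofReal Real.pi * (∑' b : u n, ENNReal.ofReal (ρ n (b : X) ^ 2))
        = ∑' b : u n, ε * ENNReal.ofReal Real.pi * ENNReal.ofReal (ρ n (b : X) ^ 2) :=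
          ENNReal.tsum_mul_left.symm
      _ ≤ ∑' b : u n, ν (closedBall (b : X) (ρ n (b : X))) := ENNReal.tsum_le_tsum h1
      _ = ν (⋃ b : u n, closedBall (b : X) (ρ n (b : X))) := by
          refine (measure_iUnion ?_ (fun b => measurableSet_closedBall)).symm
          intro i j hij
          exact hdisj n i.2 j.2 (fun h => hij (Subtype.ext h))
      _ ≤ ν (cthickening (δn n) W) := by
          refine measure_mono (iUnion_subset fun b => hball_sub n b b.2)
  -- Hausdorff measure estimate via coverings
  have hHle : μH[2] S ≤ Filter.liminf
      (fun n => ∑' b : u n, EMetric.diam (closedBall (b : X) (4 * ρ n (b : X))) ^ (2:ℝ))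
      Filter.atTop := by
    apply MeasureTheory.Measure.hausdorffMeasure_le_liminf_tsum
      (ι := fun n => ↥(u n)) 2 S
      (fun n => ENNReal.ofReal (8 * δn n))
      ?_ (fun n (b : u n) => closedBall (b : X) (4 * ρ n (b : X))) ?_ ?_
    · have : Filter.Tendsto (fun n => 8 * δn n) Filter.atTop (𝓝 0) := by
        simpa using hδn0.const_mul 8
      simpa [Function.comp_def] using (ENNReal.continuous_ofReal.tendsto 0).comp this
    · refine Filter.Eventually.of_forall fun n => fun b => ?_
      obtain ⟨b, hb⟩ := b
      have hbS := huS n hb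
      have h0 : (0:ℝ) ≤ 4 * ρ n b := by
        have := hρ0 n b hbS; positivity
      calc EMetric.diam (closedBall b (4 * ρ n b))
          ≤ 2 * ENNReal.ofReal (4 * ρ n b) := by
            rw [← Metric.emetric_closedBall h0]
            exact EMetric.diam_closedBall
        _ ≤ ENNReal.ofReal (8 * δn n) := by
            rw [← ENNReal.ofReal_ofNat, ← ENNReal.ofReal_mul (by norm_num)]
            apply ENNReal.ofReal_le_ofReal
            have h1 := (hρδ n b hbS).le
            calc 2 * (4 * ρ n b) = 8 * ρ n b := by ring
              _ ≤ 8 * δn n := mul_le_mul_of_nonneg_left h1 (by norm_num)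
    · refine Filter.Eventually.of_forall fun n => fun x hx => ?_
      obtain ⟨b, hb, hsub⟩ := hcov n x hx
      refine mem_iUnion.2 ⟨⟨b, hb⟩, hsub ?_⟩
      exact mem_closedBall_self (hρ0 n x hx).le
  -- bound each term of the liminf
  have hterm : ∀ n, (∑' b : u n,
      EMetric.diam (closedBall (b : X) (4 * ρ n (b : X))) ^ (2:ℝ))
      ≤ ENNReal.ofReal 64 * (ν (cthickening (δn n) W) / (ε * ENNReal.ofReal Real.pi)) := by
    intro n
    have h1 : ∀ b : u n, EMetric.diam (closedBall (b : X) (4 * ρ n (b : X))) ^ (2:ℝ)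
        ≤ ENNReal.ofReal 64 * ENNReal.ofReal (ρ n (b : X) ^ 2) := by
      intro b
      have hρpos := hρ0 n b (huS n b.2)
      have h0 : (0:ℝ) ≤ 4 * ρ n (b : X) := by positivity
      have hd : EMetric.diam (closedBall (b : X) (4 * ρ n (b : X)))
          ≤ ENNReal.ofReal (8 * ρ n (b : X)) := by
        rw [← Metric.emetric_closedBall h0]
        refine le_trans EMetric.diam_closedBall ?_
        rw [← ENNReal.ofReal_ofNat 2, ← ENNReal.ofReal_mul (by norm_num)]
        apply ENNReal.ofReal_le_ofReal; ring_nf; rfl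
      calc EMetric.diam (closedBall (b : X) (4 * ρ n (b : X))) ^ (2:ℝ)
          ≤ ENNReal.ofReal (8 * ρ n (b : X)) ^ (2:ℝ) :=
            ENNReal.rpow_le_rpow hd (by norm_num)
        _ = ENNReal.ofReal ((8 * ρ n (b : X)) ^ (2:ℝ)) :=
            ENNReal.ofReal_rpow_of_nonneg (by positivity) (by norm_num)
        _ = ENNReal.ofReal (64 * ρ n (b : X) ^ 2) := by
            rw [Real.rpow_two]; ring_nf
        _ = ENNReal.ofReal 64 * ENNReal.ofReal (ρ n (b : X) ^ 2) :=
            ENNReal.ofReal_mul (by norm_num)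
    have hc0 : ε * ENNReal.ofReal Real.pi ≠ 0 := by
      simp [hε0.ne', ENNReal.ofReal_pos.2 Real.pi_pos |>.ne']
    have hct : ε * ENNReal.ofReal Real.pi ≠ ⊤ :=
      ENNReal.mul_ne_top hεt ENNReal.ofReal_ne_top
    calc (∑' b : u n, EMetric.diam (closedBall (b : X) (4 * ρ n (b : X))) ^ (2:ℝ))
        ≤ ∑' b : u n, ENNReal.ofReal 64 * ENNReal.ofReal (ρ n (b : X) ^ 2) :=
          ENNReal.tsum_le_tsum h1
      _ = ENNReal.ofReal 64 * ∑' b : u n, ENNReal.ofReal (ρ n (b : X) ^ 2) :=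
          ENNReal.tsum_mul_left
      _ ≤ ENNReal.ofReal 64 * (ν (cthickening (δn n) W) / (ε * ENNReal.ofReal Real.pi)) := by
          gcongr
          rw [ENNReal.le_div_iff_mul_le (Or.inl hc0) (Or.inl hct), mul_comm]
          exact hsum n
  -- the right-hand side tends to zero
  have hlim : Filter.Tendsto
      (fun n => ENNReal.ofReal 64 * (ν (cthickening (δn n) W) / (ε * ENNReal.ofReal Real.pi)))
      Filter.atTop (𝓝 0) := by
    have hcl : Filter.Tendsto (fun n => ν (cthickening (δn n) W)) Filter.atTop (𝓝 0) := by
      have h0 := tendsto_measure_cthickening_of_isClosed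
        (μ := ν) (s := W) ⟨δ₀, hδ₀, hνfin.ne⟩ hW.isClosed
      rw [hν0] at h0
      exact h0.comp hδn0
    have hc0 : ε * ENNReal.ofReal Real.pi ≠ 0 := by
      simp [hε0.ne', ENNReal.ofReal_pos.2 Real.pi_pos |>.ne']
    have hdiv : Filter.Tendsto
        (fun n => ν (cthickening (δn n) W) / (ε * ENNReal.ofReal Real.pi))
        Filter.atTop (𝓝 0) := by
      have := ENNReal.Tendsto.mul_const (b := (ε * ENNReal.ofReal Real.pi)⁻¹) hcl
        (Or.inr (ENNReal.inv_ne_top.2 hc0))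
      simpa [div_eq_mul_inv] using this
    have := ENNReal.Tendsto.const_mul (a := ENNReal.ofReal 64) hdiv
      (Or.inr ENNReal.ofReal_ne_top)
    simpa using this
  -- conclude
  have h0 : μH[2] S ≤ 0 := by
    refine hHle.trans ?_
    have h1 : Filter.liminf
        (fun n => ∑' b : u n, EMetric.diam (closedBall (b : X) (4 * ρ n (b : X))) ^ (2:ℝ))
        Filter.atTop ≤ Filter.liminf
        (fun n => ENNReal.ofReal 64 * (ν (cthickening (δn n) W) / (ε * ENNReal.ofReal Real.pi)))
        Filter.atTop := Filter.liminf_le_liminf (Filter.Eventually.of_forall hterm)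
    rw [hlim.liminf_eq] at h1
    exact h1
  exact le_antisymm h0 (zero_le)

/-- If `W` is compact, `ν W = 0`, `ν` is finite on a closed `δ₀`-neighborhood
of `W`, and `m₂(f(B̄(x,r))) ≤ ν(B̄(x,r))` for all `x ∈ W` and `0 < r < δ₀`, then
`J_f = 0` at `H²`-almost every point of `W`. -/
theorem jacobian_vanishes_on_null_set
    {X : Type*} [MetricSpace X] [MeasurableSpace X] [BorelSpace X]
    (f : X → EuclideanSpace ℝ (Fin 2)) (ν : Measure X)
    (W : Set X) (hW : IsCompact W) (hν0 : ν W = 0)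
    (δ₀ : ℝ) (hδ₀ : 0 < δ₀) (hνfin : ν (cthickening δ₀ W) < ∞)
    (hbound : ∀ x ∈ W, ∀ r : ℝ, 0 < r → r < δ₀ →
      volume (f '' closedBall x r) ≤ ν (closedBall x r)) :
    μH[2] {x ∈ W | 0 < jacobianJ f x} = 0 := by
  have hsub : {x ∈ W | 0 < jacobianJ f x} ⊆
      ⋃ k : ℕ, {x ∈ W | ((k : ℝ≥0∞) + 1)⁻¹ < jacobianJ f x} := by
    rintro x ⟨hxW, hxJ⟩
    obtain ⟨k, hk⟩ := ENNReal.exists_inv_nat_lt hxJ.ne'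
    refine mem_iUnion.2 ⟨k, hxW, lt_of_le_of_lt ?_ hk⟩
    exact ENNReal.inv_le_inv.2 le_self_add
  refine measure_mono_null hsub (measure_iUnion_null fun k => ?_)
  refine jacobian_key_lemma f ν W hW hν0 δ₀ hδ₀ hνfin hbound _ ?_ ?_
  · simp [ENNReal.inv_pos]
  · refine ENNReal.inv_ne_top.2 ?_
    exact ne_of_gt (lt_of_lt_of_le zero_lt_one le_add_self)
end

section
/- Let X be a metric surface and f : X → ℝ² a continuous map. Fix t ∈ (1,2), k ∈ ℤ, and a compact set A ⊂ X such that every x ∈ A is an H²-density point and t^{k−1} ≤ J_f(x) ≤ t^k. Then for every δ > 0, ∫_A J_f dH² ≤ t(1+δ) ∫_{ℝ²} N(y, f, N_δ(A)) dy, where the integral on the right is with respect to 2-dimensional Lebesgue measure. -/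
open MeasureTheory Metric Set Filter
open scoped ENNReal NNReal Topology

/-- The multN function `N(y, f, A)`: the number of preimages of `y` under `f`
lying in `A`, as an extended nonnegative real. -/
noncomputable def multN {X : Type*}
    (f : X → EuclideanSpace ℝ (Fin 2)) (A : Set X) (y : EuclideanSpace ℝ (Fin 2)) : ℝ≥0∞ :=
  ({x ∈ A | f x = y}).encard

/-- `x` is an `H²`-density point of the metric space `X`:
`H²(B̄(x,r))/(π r²) → 1` as `r → 0+`. -/
def IsH2DensityPoint {X : Type*} [MetricSpace X] [MeasurableSpace X] [BorelSpace X] (x : X) : Prop :=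
  Filter.Tendsto
    (fun r : ℝ => μH[2] (Metric.closedBall x r) / ENNReal.ofReal (Real.pi * r ^ 2))
    (𝓝[>] (0 : ℝ)) (𝓝 1)

/-- Key covering estimate for the area inequality: if `A` is a compact set
of `H²`-density points of a metric surface `X` on which `t^(k-1) ≤ J_f ≤ t^k`, then for
every `δ > 0` the integral of `J_f` over `A` is bounded by
`t(1+δ) ∫_{ℝ²} N(y, f, N_δ(A)) dy`. -/
theorem jacobian_integral_le_multN_on_thickening
    {X : Type*} [MetricSpace X] [MeasurableSpace X] [BorelSpace X]
    (hsurf : ∃ U : Set (EuclideanSpace ℝ (Fin 2)),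
      IsOpen U ∧ IsConnected U ∧ Nonempty (X ≃ₜ U))
    (hloc : IsLocallyFiniteMeasure (μH[2] : Measure X))
    (f : X → EuclideanSpace ℝ (Fin 2)) (hf : Continuous f)
    (t : ℝ) (ht : t ∈ Set.Ioo (1 : ℝ) 2) (k : ℤ)
    (A : Set X) (hA : IsCompact A)
    (hdens : ∀ x ∈ A, IsH2DensityPoint x)
    (hJ : ∀ x ∈ A, ENNReal.ofReal (t ^ (k - 1)) ≤ jacobianJ f x ∧
      jacobianJ f x ≤ ENNReal.ofReal (t ^ k)) :
    ∀ δ : ℝ, 0 < δ →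
      ∫⁻ x in A, jacobianJ f x ∂(μH[2]) ≤
        ENNReal.ofReal (t * (1 + δ)) *
          ∫⁻ y, multN f (cthickening δ A) y := by
  intro δ hδ
  classical
  obtain ⟨U, hUopen, hUconn, ⟨e⟩⟩ := hsurf
  haveI : Nonempty X := ⟨e.symm ⟨hUconn.nonempty.choose, hUconn.nonempty.choose_spec⟩⟩
  haveI : SecondCountableTopology X := e.secondCountableTopology
  haveI : LocallyCompactSpace U := hUopen.locallyCompactSpace
  haveI : LocallyCompactSpace X := e.locallyCompactSpace_iff.mpr ‹_›
  haveI := hloc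
  set μ : Measure X := μH[2] with hμdef
  have ht1 : (1:ℝ) < t := ht.1
  -- measurability of images of closed sets
  have himg : ∀ s : Set X, IsClosed s → MeasurableSet (f '' s) := by
    intro s hs
    obtain ⟨K, hK, hKcov⟩ :=
      (isSigmaCompact_univ.of_isClosed_subset hs (subset_univ s)).image hf
    rw [← hKcov]
    exact MeasurableSet.iUnion fun n => (hK n).measurableSet
  -- constants
  set ε : ℝ := Real.sqrt (1 + δ) - 1 with hεdef
  have hsq : (1:ℝ) < Real.sqrt (1 + δ) := by
    have h := Real.sqrt_lt_sqrt (by norm_num : (0:ℝ) ≤ 1) (by linarith : (1:ℝ) < 1 + δ)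
    simpa using h
  have hε : 0 < ε := by simp only [hεdef]; linarith
  have hδε : 1 + δ = (1 + ε) ^ 2 := by
    have h1 : 1 + ε = Real.sqrt (1 + δ) := by simp [hεdef]
    rw [h1, Real.sq_sqrt (by linarith)]
  set τ : ℝ := t ^ (k - 1) with hτdef
  have hτ : 0 < τ := zpow_pos (by linarith) _
  set C : ℝ≥0 := (9 * (1 + δ)).toNNReal with hCdef
  have hCcoe : (C : ℝ≥0∞) = ENNReal.ofReal (9 * (1 + δ)) := rfl
  -- the Vitali family
  set 𝒯 : Set (X × ℝ) := {p | p.1 ∈ A ∧ 0 < p.2 ∧ p.2 ≤ δ ∧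
      μ (closedBall p.1 p.2) ≤ ENNReal.ofReal ((1 + ε) * (Real.pi * p.2 ^ 2)) ∧
      μ (closedBall p.1 (3 * p.2)) ≤ C * μ (closedBall p.1 p.2) ∧
      ENNReal.ofReal ((Real.pi * p.2 ^ 2) * (τ / (1 + ε))) ≤
        volume (f '' closedBall p.1 p.2)} with h𝒯def
  -- eventual density bounds
  have hdens' : ∀ x ∈ A, ∀ᶠ r in 𝓝[>](0:ℝ),
      μ (closedBall x r) ≤ ENNReal.ofReal ((1 + ε) * (Real.pi * r ^ 2)) ∧
      ENNReal.ofReal ((1 / (1 + ε)) * (Real.pi * r ^ 2)) ≤ μ (closedBall x r) := by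
    intro x hx
    have hd := hdens x hx
    have h1 : (ENNReal.ofReal (1 / (1 + ε))) < 1 := by
      rw [ENNReal.ofReal_lt_one, div_lt_one (by linarith)]; linarith
    have h2 : (1:ℝ≥0∞) < ENNReal.ofReal (1 + ε) := by
      rw [ENNReal.one_lt_ofReal]; linarith
    have hmem := hd (Ioo_mem_nhds h1 h2)
    filter_upwards [hmem, self_mem_nhdsWithin] with r hr hrpos
    have hrpos' : (0:ℝ) < r := hrpos
    have ho0 : ENNReal.ofReal (Real.pi * r ^ 2) ≠ 0 := by
      rw [Ne, ENNReal.ofReal_eq_zero, not_le]; positivity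
    have hoT : ENNReal.ofReal (Real.pi * r ^ 2) ≠ ∞ := ENNReal.ofReal_ne_top
    constructor
    · have h := hr.2.le
      rw [ENNReal.div_le_iff ho0 hoT] at h
      calc μ (closedBall x r) ≤ ENNReal.ofReal (1 + ε) * ENNReal.ofReal (Real.pi * r ^ 2) := h
        _ = _ := by rw [← ENNReal.ofReal_mul (by linarith)]
    · have h := hr.1.le
      rw [ENNReal.le_div_iff_mul_le (Or.inl ho0) (Or.inl hoT)] at h
      calc ENNReal.ofReal ((1 / (1 + ε)) * (Real.pi * r ^ 2))
          = ENNReal.ofReal (1 / (1 + ε)) * ENNReal.ofReal (Real.pi * r ^ 2) := by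
            rw [ENNReal.ofReal_mul (by positivity)]
        _ ≤ μ (closedBall x r) := h
  -- doubling eventually
  have h3 : Tendsto (fun r : ℝ => 3 * r) (𝓝[>](0:ℝ)) (𝓝[>](0:ℝ)) := by
    apply tendsto_nhdsWithin_of_tendsto_nhds_of_eventually_within
    · have h : Tendsto (fun r : ℝ => 3 * r) (𝓝 0) (𝓝 (3 * 0)) :=
        (continuous_const.mul continuous_id).tendsto 0
      rw [mul_zero] at h
      exact h.mono_left nhdsWithin_le_nhds
    · filter_upwards [self_mem_nhdsWithin] with r hr
      have : (0:ℝ) < r := hr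
      exact mem_Ioi.2 (by linarith)
  have hdoub : ∀ x ∈ A, ∀ᶠ r in 𝓝[>](0:ℝ),
      μ (closedBall x (3 * r)) ≤ C * μ (closedBall x r) := by
    intro x hx
    filter_upwards [hdens' x hx, h3.eventually (hdens' x hx)] with r hr hr3
    calc μ (closedBall x (3 * r)) ≤ ENNReal.ofReal ((1 + ε) * (Real.pi * (3 * r) ^ 2)) := hr3.1
      _ = C * ENNReal.ofReal ((1 / (1 + ε)) * (Real.pi * r ^ 2)) := by
          rw [hCcoe, ← ENNReal.ofReal_mul (by positivity)]
          congr 1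
          rw [hδε]; field_simp; ring
      _ ≤ C * μ (closedBall x r) := mul_le_mul_right hr.2 _
  -- frequently, the image has large volume
  have hfreq : ∀ x ∈ A, ∃ᶠ r in 𝓝[>](0:ℝ),
      ENNReal.ofReal ((Real.pi * r ^ 2) * (τ / (1 + ε))) ≤
        volume (f '' closedBall x r) := by
    intro x hx
    have hlow := (hJ x hx).1
    have hlt : ENNReal.ofReal (τ / (1 + ε)) <
        Filter.limsup
          (fun r : ℝ => volume (f '' closedBall x r) / ENNReal.ofReal (Real.pi * r ^ 2))
          (𝓝[>] (0 : ℝ)) := by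
      refine lt_of_lt_of_le ?_ hlow
      rw [ENNReal.ofReal_lt_ofReal_iff hτ]
      exact div_lt_self hτ (by linarith)
    have hfr := Filter.frequently_lt_of_lt_limsup (by isBoundedDefault) hlt
    apply (hfr.and_eventually self_mem_nhdsWithin).mono
    rintro r ⟨hr, hrpos⟩
    have hrpos' : (0:ℝ) < r := hrpos
    have ho0 : ENNReal.ofReal (Real.pi * r ^ 2) ≠ 0 := by
      rw [Ne, ENNReal.ofReal_eq_zero, not_le]; positivity
    have hoT : ENNReal.ofReal (Real.pi * r ^ 2) ≠ ∞ := ENNReal.ofReal_ne_top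
    have h := hr.le
    rw [ENNReal.le_div_iff_mul_le (Or.inl ho0) (Or.inl hoT)] at h
    calc ENNReal.ofReal ((Real.pi * r ^ 2) * (τ / (1 + ε)))
        = ENNReal.ofReal (τ / (1 + ε)) * ENNReal.ofReal (Real.pi * r ^ 2) := by
          rw [← ENNReal.ofReal_mul (by positivity), mul_comm]
      _ ≤ volume (f '' closedBall x r) := h
  -- fineness of the family
  have hfine : ∀ x ∈ A, ∀ η > (0:ℝ), ∃ p ∈ 𝒯, p.2 ≤ η ∧ p.1 = x := by
    intro x hx η hη
    have hIoc : Ioc (0:ℝ) (min δ η) ∈ 𝓝[>](0:ℝ) :=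
      Ioc_mem_nhdsGT_of_mem ⟨le_refl 0, lt_min hδ hη⟩
    have hev : ∀ᶠ r in 𝓝[>](0:ℝ),
        (μ (closedBall x r) ≤ ENNReal.ofReal ((1 + ε) * (Real.pi * r ^ 2)) ∧
          ENNReal.ofReal ((1 / (1 + ε)) * (Real.pi * r ^ 2)) ≤ μ (closedBall x r)) ∧
        μ (closedBall x (3 * r)) ≤ C * μ (closedBall x r) ∧ r ∈ Ioc (0:ℝ) (min δ η) := by
      filter_upwards [hdens' x hx, hdoub x hx, hIoc] with r h1 h2 h3
      exact ⟨h1, h2, h3⟩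
    obtain ⟨r, hQ, hd1, hd2, hd3⟩ := ((hfreq x hx).and_eventually hev).exists
    refine ⟨(x, r), ⟨hx, hd3.1, hd3.2.trans (min_le_left _ _), hd1.1, hd2, hQ⟩,
      hd3.2.trans (min_le_right _ _), rfl⟩
  -- apply the Vitali covering theorem
  obtain ⟨u, hu𝒯, hucnt, hudisj, hucov⟩ :=
    Vitali.exists_disjoint_covering_ae μ A 𝒯 C (fun p => p.2) (fun p => p.1)
      (fun p => closedBall p.1 p.2)
      (fun p _ => Subset.rfl)
      (fun p hp => hp.2.2.2.2.1)
      (fun p hp => ⟨p.1, ball_subset_interior_closedBall (mem_ball_self hp.2.1)⟩)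
      (fun p _ => isClosed_closedBall)
      hfine
  haveI : Countable ↥u := hucnt.to_subtype
  set T : Set X := cthickening δ A with hTdef
  have hballT : ∀ p ∈ u, closedBall p.1 p.2 ⊆ T := fun p hp =>
    (closedBall_subset_closedBall (hu𝒯 hp).2.2.1).trans
      (closedBall_subset_cthickening (hu𝒯 hp).1 δ)
  -- pointwise counting bound
  have hpoint : ∀ y : EuclideanSpace ℝ (Fin 2),
      (∑' p : ↥u, (f '' closedBall (↑p : X × ℝ).1 (↑p : X × ℝ).2).indicator 1 y)
        ≤ multN f T y := by
    intro y
    rw [ENNReal.tsum_eq_iSup_sum]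
    apply iSup_le
    intro F
    set F' := F.filter
      (fun p : ↥u => y ∈ f '' closedBall (↑p : X × ℝ).1 (↑p : X × ℝ).2) with hF'def
    have hsum : (∑ p ∈ F, (f '' closedBall (↑p : X × ℝ).1 (↑p : X × ℝ).2).indicator 1 y)
        = (F'.card : ℝ≥0∞) := by
      rw [hF'def, ← Finset.sum_boole]
      apply Finset.sum_congr rfl
      intro p _
      by_cases h : y ∈ f '' closedBall (↑p : X × ℝ).1 (↑p : X × ℝ).2 <;>
        simp [Set.indicator_apply, h]
    rw [hsum]
    set g : ↥u → X := fun p =>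
      if h : ∃ x ∈ closedBall (↑p : X × ℝ).1 (↑p : X × ℝ).2, f x = y then h.choose
      else Classical.arbitrary X with hgdef
    have hg : ∀ p : ↥u, y ∈ f '' closedBall (↑p : X × ℝ).1 (↑p : X × ℝ).2 →
        g p ∈ closedBall (↑p : X × ℝ).1 (↑p : X × ℝ).2 ∧ f (g p) = y := by
      intro p hp
      obtain ⟨x, hx, hfx⟩ := hp
      have hex : ∃ x ∈ closedBall (↑p : X × ℝ).1 (↑p : X × ℝ).2, f x = y := ⟨x, hx, hfx⟩
      simp only [hgdef, dif_pos hex]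
      exact hex.choose_spec
    have hmapsTo : MapsTo g (↑F' : Set ↥u) {x ∈ T | f x = y} := by
      intro p hp
      have hp' : y ∈ f '' closedBall (↑p : X × ℝ).1 (↑p : X × ℝ).2 :=
        (Finset.mem_filter.1 hp).2
      obtain ⟨h1, h2⟩ := hg p hp'
      exact ⟨hballT _ p.2 h1, h2⟩
    have hinj : InjOn g (↑F' : Set ↥u) := by
      intro p hp q hq hpq
      have hp' := (Finset.mem_filter.1 hp).2
      have hq' := (Finset.mem_filter.1 hq).2
      by_contra hne
      have hne' : (p : X × ℝ) ≠ (q : X × ℝ) := fun h => hne (Subtype.ext h)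
      have hdisj := hudisj p.2 q.2 hne'
      exact Set.disjoint_left.1 hdisj (hg p hp').1 (by rw [hpq]; exact (hg q hq').1)
    have hcard : ((↑F' : Set ↥u)).encard ≤ ({x ∈ T | f x = y}).encard :=
      Set.encard_le_encard_of_injOn hmapsTo hinj
    rw [Set.encard_coe_eq_coe_finsetCard] at hcard
    calc (F'.card : ℝ≥0∞) = ((F'.card : ℕ∞) : ℝ≥0∞) := by simp
      _ ≤ ((({x ∈ T | f x = y}).encard : ℕ∞) : ℝ≥0∞) := ENat.toENNReal_le.2 hcard
      _ = multN f T y := rfl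
  -- main chain of estimates
  have step1 : ∫⁻ x in A, jacobianJ f x ∂μ ≤ ENNReal.ofReal (t ^ k) * μ A := by
    calc ∫⁻ x in A, jacobianJ f x ∂μ ≤ ∫⁻ _ in A, ENNReal.ofReal (t ^ k) ∂μ :=
        setLIntegral_mono measurable_const (fun x hx => (hJ x hx).2)
      _ = ENNReal.ofReal (t ^ k) * μ A := setLIntegral_const _ _
  have step2 : μ A ≤ ∑' p : ↥u, μ (closedBall (↑p : X × ℝ).1 (↑p : X × ℝ).2) := by
    calc μ A ≤ μ (A ∩ ⋃ p ∈ u, closedBall p.1 p.2) + μ (A \ ⋃ p ∈ u, closedBall p.1 p.2) :=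
        measure_le_inter_add_diff μ A _
      _ = μ (A ∩ ⋃ p ∈ u, closedBall p.1 p.2) := by rw [hucov, add_zero]
      _ ≤ μ (⋃ p ∈ u, closedBall p.1 p.2) := measure_mono inter_subset_right
      _ ≤ ∑' p : ↥u, μ (closedBall (↑p : X × ℝ).1 (↑p : X × ℝ).2) :=
        measure_biUnion_le μ hucnt _
  have step3 : ∀ p : ↥u, μ (closedBall (↑p : X × ℝ).1 (↑p : X × ℝ).2) ≤
      ENNReal.ofReal ((1 + δ) / τ) *
        volume (f '' closedBall (↑p : X × ℝ).1 (↑p : X × ℝ).2) := by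
    intro p
    have h𝒯 := hu𝒯 p.2
    calc μ (closedBall (↑p : X × ℝ).1 (↑p : X × ℝ).2)
        ≤ ENNReal.ofReal ((1 + ε) * (Real.pi * (↑p : X × ℝ).2 ^ 2)) := h𝒯.2.2.2.1
      _ = ENNReal.ofReal ((1 + δ) / τ) *
          ENNReal.ofReal ((Real.pi * (↑p : X × ℝ).2 ^ 2) * (τ / (1 + ε))) := by
          rw [← ENNReal.ofReal_mul (by positivity)]
          congr 1
          rw [hδε]; field_simp
      _ ≤ _ := mul_le_mul_right h𝒯.2.2.2.2.2 _
  have step5 : (∑' p : ↥u, volume (f '' closedBall (↑p : X × ℝ).1 (↑p : X × ℝ).2)) ≤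
      ∫⁻ y, multN f T y := by
    have hm : ∀ p : ↥u, MeasurableSet (f '' closedBall (↑p : X × ℝ).1 (↑p : X × ℝ).2) :=
      fun p => himg _ isClosed_closedBall
    calc (∑' p : ↥u, volume (f '' closedBall (↑p : X × ℝ).1 (↑p : X × ℝ).2))
        = ∑' p : ↥u, ∫⁻ y, (f '' closedBall (↑p : X × ℝ).1 (↑p : X × ℝ).2).indicator 1 y := by
          congr 1; funext p; rw [lintegral_indicator_one (hm p)]
      _ = ∫⁻ y, ∑' p : ↥u, (f '' closedBall (↑p : X × ℝ).1 (↑p : X × ℝ).2).indicator 1 y :=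
          (lintegral_tsum fun p => (measurable_one.indicator (hm p)).aemeasurable).symm
      _ ≤ ∫⁻ y, multN f T y := lintegral_mono hpoint
  have harith : ENNReal.ofReal (t ^ k) * ENNReal.ofReal ((1 + δ) / τ)
      = ENNReal.ofReal (t * (1 + δ)) := by
    rw [← ENNReal.ofReal_mul (by positivity)]
    congr 1
    have htk : t ^ k = t * τ := by
      have h := zpow_add_one₀ (show t ≠ 0 by linarith) (k - 1)
      have h2 : k - 1 + 1 = k := by ring
      rw [h2] at h
      rw [hτdef, h]; ring
    rw [htk]
    field_simp
  calc ∫⁻ x in A, jacobianJ f x ∂μ ≤ ENNReal.ofReal (t ^ k) * μ A := step1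
    _ ≤ ENNReal.ofReal (t ^ k) * ∑' p : ↥u, μ (closedBall (↑p : X × ℝ).1 (↑p : X × ℝ).2) :=
        mul_le_mul_right step2 _
    _ ≤ ENNReal.ofReal (t ^ k) * ∑' p : ↥u, (ENNReal.ofReal ((1 + δ) / τ) *
          volume (f '' closedBall (↑p : X × ℝ).1 (↑p : X × ℝ).2)) :=
        mul_le_mul_right (ENNReal.tsum_le_tsum step3) _
    _ = ENNReal.ofReal (t ^ k) * (ENNReal.ofReal ((1 + δ) / τ) *
          ∑' p : ↥u, volume (f '' closedBall (↑p : X × ℝ).1 (↑p : X × ℝ).2)) := by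
        rw [ENNReal.tsum_mul_left]
    _ ≤ ENNReal.ofReal (t ^ k) * (ENNReal.ofReal ((1 + δ) / τ) * ∫⁻ y, multN f T y) :=
        mul_le_mul_right (mul_le_mul_right step5 _) _
    _ = ENNReal.ofReal (t * (1 + δ)) * ∫⁻ y, multN f T y := by rw [← mul_assoc, harith]
end

section
/- Let X be a metric surface and f : X → ℝ² a continuous map satisfying Lusin's condition (N). Fix t ∈ (1,2), k ∈ ℤ, and a compact set A ⊂ X such that every x ∈ A is an H²-density point, t^{k−1} ≤ J_f(x) ≤ t^k for every x ∈ A, and every x ∈ A has an open neighborhood on which f is injective. Then ∫_{ℝ²} N(y, f, A) dy ≤ t ∫_A J_f dH², where the integral on the left is with respect to 2-dimensional Lebesgue measure. -/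
open MeasureTheory Metric Set Filter
open scoped ENNReal NNReal Topology

private lemma three_mul_tendsto : Filter.Tendsto (fun r : ℝ => 3 * r) (𝓝[>] (0 : ℝ)) (𝓝[>] (0 : ℝ)) := by
  refine tendsto_nhdsWithin_iff.2 ⟨?_, ?_⟩
  · have h : Filter.Tendsto (fun r : ℝ => 3 * r) (𝓝 0) (𝓝 (3 * 0)) :=
      tendsto_id.const_mul 3
    simpa using h.mono_left nhdsWithin_le_nhds
  · filter_upwards [eventually_mem_nhdsWithin] with r hr
    exact mul_pos (by norm_num : (0:ℝ) < 3) hr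

/-- Key covering estimate for the reverse area inequality: if `f` is
continuous, satisfies Lusin's condition (N), `A` is a compact set of `H²`-density points
on which `t^(k-1) ≤ J_f ≤ t^k` and near each point of which `f` is injective, then
`∫_{ℝ²} N(y, f, A) dy ≤ t ∫_A J_f dH²`. -/
theorem multiplicity_integral_le_jacobian_integral
    {X : Type*} [MetricSpace X] [MeasurableSpace X] [BorelSpace X]
    (hsurf : ∃ U : Set (EuclideanSpace ℝ (Fin 2)),
      IsOpen U ∧ IsConnected U ∧ Nonempty (X ≃ₜ U))
    (hloc : IsLocallyFiniteMeasure (μH[2] : Measure X))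
    (f : X → EuclideanSpace ℝ (Fin 2)) (hf : Continuous f)
    (hLusin : ∀ E : Set X, μH[2] E = 0 → volume (f '' E) = 0)
    (t : ℝ) (ht : t ∈ Set.Ioo (1 : ℝ) 2) (k : ℤ)
    (A : Set X) (hA : IsCompact A)
    (hdens : ∀ x ∈ A, IsH2DensityPoint x)
    (hJ : ∀ x ∈ A, ENNReal.ofReal (t ^ (k - 1)) ≤ jacobianJ f x ∧
      jacobianJ f x ≤ ENNReal.ofReal (t ^ k))
    (hinj : ∀ x ∈ A, ∃ V : Set X, IsOpen V ∧ x ∈ V ∧ Set.InjOn f V) :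
    ∫⁻ y, multN f A y ≤ ENNReal.ofReal t * ∫⁻ x in A, jacobianJ f x ∂(μH[2]) := by
  classical
  obtain ⟨U, hUopen, -, ⟨e⟩⟩ := hsurf
  haveI : SecondCountableTopology X := e.isEmbedding.secondCountableTopology
  haveI := hloc
  set μ : Measure X := μH[2] with hμdef
  obtain ⟨ht1, ht2⟩ := ht
  have ht0 : (0:ℝ) < t := lt_trans one_pos ht1
  have htk : (0:ℝ) < t ^ k := zpow_pos ht0 k
  have hπ : (0:ℝ) < Real.pi := Real.pi_pos
  have hAmeas : MeasurableSet A := hA.isClosed.measurableSet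
  have hμA : μ A ≠ ∞ := hA.measure_lt_top.ne
  have key : ∫⁻ y, multN f A y ≤ ENNReal.ofReal (t ^ k) * μ A := by
    -- finite thickening
    obtain ⟨W, hAW, hWopen, hWfin⟩ := hA.exists_open_superset_measure_lt_top μ
    obtain ⟨R, hRpos, hRW⟩ := hA.exists_cthickening_subset_open hWopen hAW
    have hthick : Tendsto (fun r => μ (cthickening r A)) (𝓝 0) (𝓝 (μ A)) :=
      tendsto_measure_cthickening_of_isClosed
        ⟨R, hRpos, ((measure_mono hRW).trans_lt hWfin).ne⟩ hA.isClosed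
    have claim : ∀ δ : ℝ, δ ∈ Set.Ioo (0:ℝ) (1/2) →
        ∫⁻ y, multN f A y ≤
          ENNReal.ofReal ((1+δ) * t ^ k / (1-δ)) * (μ A + ENNReal.ofReal δ) := by
      intro δ hδ
      obtain ⟨hδ0, hδhalf⟩ := hδ
      have hδ1 : (0:ℝ) < 1 - δ := by linarith
      -- choose ε₀
      obtain ⟨ε₀, hε₀pos, hε₀⟩ : ∃ ε₀ > (0:ℝ),
          μ (cthickening ε₀ A) ≤ μ A + ENNReal.ofReal δ := by
        have hlt : μ A < μ A + ENNReal.ofReal δ :=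
          ENNReal.lt_add_right hμA (by simpa using hδ0)
        have hev := (hthick.mono_left
          (nhdsWithin_le_nhds : 𝓝[>] (0:ℝ) ≤ 𝓝 0)).eventually_lt_const hlt
        obtain ⟨r, hr1, hr2⟩ := (hev.and eventually_mem_nhdsWithin).exists
        exact ⟨r, hr2, hr1.le⟩
      -- the fine family
      set B : X × ℝ → Set X := fun p => closedBall p.1 p.2 with hBdef
      set T : Set (X × ℝ) := {p | p.1 ∈ A ∧ 0 < p.2 ∧ p.2 ≤ ε₀ ∧
        Set.InjOn f (closedBall p.1 p.2) ∧
        volume (f '' closedBall p.1 p.2) ≤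
          ENNReal.ofReal ((1+δ) * t ^ k * (Real.pi * p.2 ^ 2)) ∧
        ENNReal.ofReal ((1-δ) * (Real.pi * p.2 ^ 2)) ≤ μ (closedBall p.1 p.2) ∧
        μ (closedBall p.1 (3 * p.2)) ≤ 100 * μ (closedBall p.1 p.2)} with hTdef
      -- fineness
      have hfine : ∀ x ∈ A, ∀ ε > (0:ℝ), ∃ p ∈ T, p.2 ≤ ε ∧ p.1 = x := by
        intro x hx ε hε
        obtain ⟨V, hVopen, hxV, hVinj⟩ := hinj x hx
        obtain ⟨r₁, hr₁pos, hr₁V⟩ :=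
          (Metric.nhds_basis_closedBall.mem_iff).1 (hVopen.mem_nhds hxV)
        have hd := hdens x hx
        -- smallness
        have e1 : ∀ᶠ r in 𝓝[>] (0:ℝ), 0 < r := eventually_mem_nhdsWithin
        have e2 : ∀ᶠ r in 𝓝[>] (0:ℝ), r ≤ ε₀ ∧ r ≤ ε ∧ r ≤ r₁ := by
          have hm : (0:ℝ) < min ε₀ (min ε r₁) := by positivity
          filter_upwards [Ioo_mem_nhdsGT_of_mem ⟨le_refl (0:ℝ), hm⟩] with r hr
          have := hr.2.le
          exact ⟨this.trans (min_le_left _ _),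
            (this.trans ((min_le_right _ _).trans (min_le_left _ _))),
            (this.trans ((min_le_right _ _).trans (min_le_right _ _)))⟩
        -- volume bound
        have e3 : ∀ᶠ r in 𝓝[>] (0:ℝ), 0 < r →
            volume (f '' closedBall x r) ≤
              ENNReal.ofReal ((1+δ) * t ^ k * (Real.pi * r ^ 2)) := by
          have h1 : ENNReal.ofReal (t ^ k) < ENNReal.ofReal ((1+δ) * t ^ k) := by
            rw [ENNReal.ofReal_lt_ofReal_iff (by nlinarith)]
            nlinarith
          have hev := eventually_lt_of_limsup_lt (lt_of_le_of_lt (hJ x hx).2 h1)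
          filter_upwards [hev] with r hr hrpos
          have hb0 : ENNReal.ofReal (Real.pi * r ^ 2) ≠ 0 := by
            simp only [ne_eq, ENNReal.ofReal_eq_zero, not_le]
            positivity
          have := (ENNReal.div_le_iff_le_mul (Or.inl hb0)
            (Or.inl ENNReal.ofReal_ne_top)).1 hr.le
          calc volume (f '' closedBall x r)
              ≤ ENNReal.ofReal ((1+δ) * t ^ k) * ENNReal.ofReal (Real.pi * r ^ 2) := this
            _ = ENNReal.ofReal ((1+δ) * t ^ k * (Real.pi * r ^ 2)) := by
                rw [← ENNReal.ofReal_mul (by nlinarith)]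
        -- density lower bound, general constant
        have elow : ∀ c : ℝ, 0 ≤ c → c < 1 → ∀ᶠ r in 𝓝[>] (0:ℝ), 0 < r →
            ENNReal.ofReal (c * (Real.pi * r ^ 2)) ≤ μ (closedBall x r) := by
          intro c hc0 hc
          have h1 : ENNReal.ofReal c < 1 := by
            rw [← ENNReal.ofReal_one]
            exact ENNReal.ofReal_lt_ofReal_iff one_pos |>.2 hc
          have hev := hd.eventually_const_lt h1
          filter_upwards [hev] with r hr hrpos
          have hb0 : ENNReal.ofReal (Real.pi * r ^ 2) ≠ 0 := by
            simp only [ne_eq, ENNReal.ofReal_eq_zero, not_le]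
            positivity
          have := (ENNReal.le_div_iff_mul_le (Or.inl hb0)
            (Or.inl ENNReal.ofReal_ne_top)).1 hr.le
          calc ENNReal.ofReal (c * (Real.pi * r ^ 2))
              = ENNReal.ofReal c * ENNReal.ofReal (Real.pi * r ^ 2) :=
                ENNReal.ofReal_mul hc0
            _ ≤ μ (closedBall x r) := this
        have e4 := elow (1-δ) hδ1.le (by linarith)
        have e5 : ∀ᶠ r in 𝓝[>] (0:ℝ), 0 < r →
            μ (closedBall x (3*r)) ≤ 100 * μ (closedBall x r) := by
          have hev2 : ∀ᶠ r in 𝓝[>] (0:ℝ),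
              μ (closedBall x (3*r)) / ENNReal.ofReal (Real.pi * (3*r) ^ 2) < 2 := by
            have h := (hd.comp three_mul_tendsto).eventually_lt_const
              (by norm_num : (1:ℝ≥0∞) < 2)
            simpa using h
          have e5a := elow (1/2) (by norm_num) (by norm_num)
          filter_upwards [hev2, e5a] with r h2 hlow hrpos
          have hb0 : ENNReal.ofReal (Real.pi * (3*r) ^ 2) ≠ 0 := by
            simp only [ne_eq, ENNReal.ofReal_eq_zero, not_le]
            positivity
          have hupper := (ENNReal.div_le_iff_le_mul (Or.inl hb0)
            (Or.inl ENNReal.ofReal_ne_top)).1 h2.le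
          have harith : (2:ℝ≥0∞) * ENNReal.ofReal (Real.pi * (3*r) ^ 2)
              ≤ 100 * ENNReal.ofReal (1/2 * (Real.pi * r ^ 2)) := by
            rw [show (2:ℝ≥0∞) = ENNReal.ofReal 2 by norm_num,
              show (100:ℝ≥0∞) = ENNReal.ofReal 100 by norm_num,
              ← ENNReal.ofReal_mul (by norm_num), ← ENNReal.ofReal_mul (by norm_num)]
            apply ENNReal.ofReal_le_ofReal
            nlinarith [sq_nonneg r, hπ]
          calc μ (closedBall x (3*r)) ≤ 2 * ENNReal.ofReal (Real.pi * (3*r)^2) := hupper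
            _ ≤ 100 * ENNReal.ofReal (1/2 * (Real.pi * r ^ 2)) := harith
            _ ≤ 100 * μ (closedBall x r) := mul_le_mul_right (hlow hrpos) _
        obtain ⟨r, hr1, ⟨hr2a, hr2b, hr2c⟩, hr3, hr4, hr5⟩ :=
          (e1.and (e2.and (e3.and (e4.and e5)))).exists
        exact ⟨(x, r), ⟨hx, hr1, hr2a,
          hVinj.mono ((closedBall_subset_closedBall hr2c).trans hr₁V),
          hr3 hr1, hr4 hr1, hr5 hr1⟩, hr2b, rfl⟩
      -- apply the Vitali covering theorem
      obtain ⟨u, huT, hucount, hudisj, hucover⟩ :=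
        Vitali.exists_disjoint_covering_ae μ A T (100:ℝ≥0) (fun p => p.2) (fun p => p.1) B
          (fun p _ => Subset.rfl)
          (fun p hp => by simpa using hp.2.2.2.2.2.2)
          (fun p hp => ⟨p.1, Metric.ball_subset_interior_closedBall
            (Metric.mem_ball_self hp.2.1)⟩)
          (fun p _ => isClosed_closedBall)
          (fun x hx ε hε => hfine x hx ε hε)
      haveI : Countable ↥u := hucount.to_subtype
      set Z : Set X := A \ ⋃ p ∈ u, B p with hZdef
      have hvolZ : volume (f '' Z) = 0 := hLusin Z hucover
      have hae : ∀ᵐ y, y ∉ toMeasurable volume (f '' Z) := by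
        have h0 : volume (toMeasurable volume (f '' Z)) = 0 := by
          rw [measure_toMeasurable]; exact hvolZ
        exact measure_eq_zero_iff_ae_notMem.1 h0
      set S : X × ℝ → Set (EuclideanSpace ℝ (Fin 2)) :=
        fun p => toMeasurable volume (f '' B p) with hSdef
      have hpt : ∀ y, y ∉ toMeasurable volume (f '' Z) →
          multN f A y ≤ ∑' a : ↥u, (S ↑a).indicator (1 : EuclideanSpace ℝ (Fin 2) → ℝ≥0∞) y := by
        intro y hy
        have hFsub : {x ∈ A | f x = y} ⊆ ⋃ a : ↥u, ({x ∈ A | f x = y} ∩ B ↑a) := by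
          intro x hxF
          have hxG : x ∈ ⋃ p ∈ u, B p := by
            by_contra hxn
            exact hy (subset_toMeasurable _ _ ⟨x, ⟨hxF.1, hxn⟩, hxF.2⟩)
          rcases mem_iUnion₂.1 hxG with ⟨p, hpu, hxp⟩
          exact mem_iUnion.2 ⟨⟨p, hpu⟩, hxF, hxp⟩
        calc multN f A y = ∑' _ : {x ∈ A | f x = y}, (1:ℝ≥0∞) :=
              (ENNReal.tsum_set_one _).symm
          _ ≤ Measure.count {x ∈ A | f x = y} := Measure.le_count_apply
          _ ≤ Measure.count (⋃ a : ↥u, ({x ∈ A | f x = y} ∩ B ↑a)) :=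
              measure_mono hFsub
          _ ≤ ∑' a : ↥u, Measure.count ({x ∈ A | f x = y} ∩ B ↑a) :=
              measure_iUnion_le _
          _ ≤ ∑' a : ↥u, (S ↑a).indicator (1 : EuclideanSpace ℝ (Fin 2) → ℝ≥0∞) y := by
              refine ENNReal.tsum_le_tsum fun a => ?_
              rcases Set.eq_empty_or_nonempty ({x ∈ A | f x = y} ∩ B ↑a) with
                he | ⟨z, hzF, hzB⟩
              · simp [he]
              · have hinj' := (huT a.2).2.2.2.1
                have hsub : {x ∈ A | f x = y} ∩ B ↑a ⊆ {z} := by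
                  rintro w ⟨hwF, hwB⟩
                  have hfw : f w = f z := by
                    rw [hwF.2, hzF.2]
                  exact hinj' hwB hzB hfw
                have hyS : y ∈ S ↑a := subset_toMeasurable _ _ ⟨z, hzB, hzF.2⟩
                calc Measure.count ({x ∈ A | f x = y} ∩ B ↑a)
                    ≤ Measure.count {z} := measure_mono hsub
                  _ = 1 := Measure.count_singleton z
                  _ = (S ↑a).indicator (1 : EuclideanSpace ℝ (Fin 2) → ℝ≥0∞) y := by
                      simp [Set.indicator_of_mem hyS]
      have hint : ∫⁻ y, multN f A y ≤ ∑' a : ↥u, volume (f '' B ↑a) := by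
        calc ∫⁻ y, multN f A y
            ≤ ∫⁻ y, ∑' a : ↥u, (S ↑a).indicator (1 : EuclideanSpace ℝ (Fin 2) → ℝ≥0∞) y :=
              lintegral_mono_ae (hae.mono hpt)
          _ = ∑' a : ↥u, ∫⁻ y, (S ↑a).indicator (1 : EuclideanSpace ℝ (Fin 2) → ℝ≥0∞) y :=
              lintegral_tsum fun a =>
                (measurable_one.indicator (measurableSet_toMeasurable _ _)).aemeasurable
          _ = ∑' a : ↥u, volume (f '' B ↑a) := by
              refine tsum_congr fun a => ?_
              rw [lintegral_indicator_one (measurableSet_toMeasurable _ _),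
                measure_toMeasurable]
      have h1δ : (1:ℝ) - δ ≠ 0 := hδ1.ne'
      have hball : ∀ a : ↥u, volume (f '' B ↑a) ≤
          ENNReal.ofReal ((1+δ) * t ^ k / (1-δ)) * μ (B ↑a) := by
        intro a
        obtain ⟨-, hr0, -, -, hvol, hlow, -⟩ := huT a.2
        refine hvol.trans ?_
        have harith : (1+δ) * t ^ k * (Real.pi * (a:X×ℝ).2 ^ 2)
            = ((1+δ) * t ^ k / (1-δ)) * ((1-δ) * (Real.pi * (a:X×ℝ).2 ^ 2)) := by
          field_simp
        rw [harith, ENNReal.ofReal_mul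
          (div_nonneg (mul_nonneg (by linarith) htk.le) hδ1.le)]
        exact mul_le_mul_right hlow _
      calc ∫⁻ y, multN f A y ≤ ∑' a : ↥u, volume (f '' B ↑a) := hint
        _ ≤ ∑' a : ↥u, ENNReal.ofReal ((1+δ) * t ^ k / (1-δ)) * μ (B ↑a) :=
            ENNReal.tsum_le_tsum hball
        _ = ENNReal.ofReal ((1+δ) * t ^ k / (1-δ)) * ∑' a : ↥u, μ (B ↑a) :=
            ENNReal.tsum_mul_left
        _ = ENNReal.ofReal ((1+δ) * t ^ k / (1-δ)) * μ (⋃ p ∈ u, B p) := by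
            rw [measure_biUnion hucount hudisj fun p _ => isClosed_closedBall.measurableSet]
        _ ≤ ENNReal.ofReal ((1+δ) * t ^ k / (1-δ)) * (μ A + ENNReal.ofReal δ) := by
            apply mul_le_mul_right
            refine le_trans (measure_mono ?_) hε₀
            refine iUnion₂_subset fun p hp => ?_
            exact (closedBall_subset_closedBall (huT hp).2.2.1).trans
              (closedBall_subset_cthickening (huT hp).1 ε₀)
    -- pass to the limit in δ
    have hconst : Tendsto (fun δ : ℝ => ENNReal.ofReal ((1+δ) * t ^ k / (1-δ)))
        (𝓝[>] (0:ℝ)) (𝓝 (ENNReal.ofReal (t ^ k))) := by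
      have hreal : Tendsto (fun δ : ℝ => (1+δ) * t ^ k / (1-δ)) (𝓝 (0:ℝ))
          (𝓝 (t ^ k)) := by
        have : ContinuousAt (fun δ : ℝ => (1+δ) * t ^ k / (1-δ)) 0 := by
          apply ContinuousAt.div
          · fun_prop
          · fun_prop
          · norm_num
        have h0 : (1+(0:ℝ)) * t ^ k / (1-0) = t ^ k := by norm_num
        simpa [h0] using this.tendsto
      exact (ENNReal.continuous_ofReal.tendsto _).comp (hreal.mono_left nhdsWithin_le_nhds)
    have hadd : Tendsto (fun δ : ℝ => μ A + ENNReal.ofReal δ) (𝓝[>] (0:ℝ)) (𝓝 (μ A)) := by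
      have h2 : Tendsto (fun δ : ℝ => ENNReal.ofReal δ) (𝓝[>] (0:ℝ)) (𝓝 0) := by
        have := (ENNReal.continuous_ofReal.tendsto (0:ℝ)).mono_left
          (nhdsWithin_le_nhds (s := Set.Ioi (0:ℝ)))
        simpa using this
      simpa using (tendsto_const_nhds (x := μ A)
        (f := 𝓝[>] (0:ℝ))).add h2
    have hlim : Tendsto (fun δ : ℝ =>
        ENNReal.ofReal ((1+δ) * t ^ k / (1-δ)) * (μ A + ENNReal.ofReal δ))
        (𝓝[>] (0:ℝ)) (𝓝 (ENNReal.ofReal (t ^ k) * μ A)) :=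
      ENNReal.Tendsto.mul hconst (Or.inr hμA) hadd (Or.inr ENNReal.ofReal_ne_top)
    refine ge_of_tendsto hlim ?_
    filter_upwards [Ioo_mem_nhdsGT_of_mem ⟨le_refl (0:ℝ), one_half_pos⟩] with δ hδ
    exact claim δ hδ
  calc ∫⁻ y, multN f A y ≤ ENNReal.ofReal (t ^ k) * μ A := key
    _ = ENNReal.ofReal t * (ENNReal.ofReal (t ^ (k-1)) * μ A) := by
        rw [← mul_assoc, ← ENNReal.ofReal_mul ht0.le]
        congr 2
        rw [← zpow_one_add₀ ht0.ne' (k-1)]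
        congr 1
        omega
    _ ≤ ENNReal.ofReal t * ∫⁻ x in A, jacobianJ f x ∂μ := by
        apply mul_le_mul_right
        rw [← setLIntegral_const A (ENNReal.ofReal (t ^ (k-1)))]
        refine lintegral_mono_ae ?_
        filter_upwards [ae_restrict_mem hAmeas] with x hx
        exact (hJ x hx).1
end

section
/- Let X be a metric surface and f : X → ℝ² a continuous map satisfying Lusin's condition (N). Assume that J_f is Borel measurable and that there is a countable set C ⊂ X such that every x ∈ X ∖ C has an open neighborhood on which f is injective. Let F ⊂ X be a Borel set such that H²-almost every x ∈ F is an H²-density point. Then ∫_{ℝ²} N(y, f, F) dy ≤ ∫_F J_f dH². -/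
open MeasureTheory Metric Set Filter
open scoped ENNReal NNReal Topology

section Aux

variable {X : Type*} [MetricSpace X] [MeasurableSpace X] [BorelSpace X]

private lemma tendsto_three_mul :
    Tendsto (fun r : ℝ => 3 * r) (𝓝[>] (0 : ℝ)) (𝓝[>] (0 : ℝ)) := by
  refine tendsto_nhdsWithin_of_tendsto_nhds_of_eventually_within _ ?_ ?_
  · have : Tendsto (fun r : ℝ => 3 * r) (𝓝 (0:ℝ)) (𝓝 (3 * 0)) :=
      (continuous_const.mul continuous_id).tendsto 0
    simpa using this.mono_left nhdsWithin_le_nhds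
  · filter_upwards [self_mem_nhdsWithin] with r (hr : (0:ℝ) < r)
    exact mem_Ioi.2 (by linarith)

/-- Core covering lemma: if every point of `A` is a density point and `J_f < c` on `A`,
then `m₂(f(A)) ≤ c ⬝ H²(A)`. -/
private lemma core_cover [SecondCountableTopology X]
    [IsLocallyFiniteMeasure (μH[2] : Measure X)]
    (f : X → EuclideanSpace ℝ (Fin 2))
    (hLusin : ∀ E : Set X, μH[2] E = 0 → volume (f '' E) = 0)
    (A : Set X) (hA : ∀ x ∈ A, IsH2DensityPoint x)
    (c : ℝ≥0∞) (hc : c ≠ ∞) (hAc : ∀ x ∈ A, jacobianJ f x < c) :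
    volume (f '' A) ≤ c * μH[2] A := by
  rcases eq_or_ne c 0 with rfl | hc0
  · have hAe : A = ∅ := eq_empty_of_forall_notMem fun x hx => by simpa using hAc x hx
    simp [hAe]
  by_cases hμA : μH[2] A = ∞
  · rw [hμA, ENNReal.mul_top hc0]; exact le_top
  -- the key quantitative estimate
  have key : ∀ ε : ℝ, 0 < ε → ε < 1 → ∀ δ : ℝ≥0∞, δ ≠ 0 → δ ≠ ∞ →
      volume (f '' A) ≤ c * (ENNReal.ofReal (1 - ε))⁻¹ * (μH[2] A + δ) := by
    intro ε hε0 hε1 δ hδ0 hδt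
    set q : ℝ≥0∞ := ENNReal.ofReal (1 - ε) with hqdef
    have hq0 : q ≠ 0 := (ENNReal.ofReal_pos.2 (by linarith)).ne'
    have hqt : q ≠ ∞ := ENNReal.ofReal_ne_top
    -- an open set of nearly minimal measure around A
    have hlt : μH[2] A < μH[2] A + δ := ENNReal.lt_add_right hμA hδ0
    obtain ⟨U, hAU, hUopen, hUlt⟩ := Set.exists_isOpen_lt_of_lt A _ hlt
    -- the good radii
    have hP : ∀ x ∈ A, ∀ᶠ r in 𝓝[>] (0 : ℝ),
        volume (f '' closedBall x r) ≤ c * ENNReal.ofReal (Real.pi * r ^ 2) ∧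
        q * ENNReal.ofReal (Real.pi * r ^ 2) ≤ μH[2] (closedBall x r) ∧
        μH[2] (closedBall x (3 * r)) ≤ 36 * μH[2] (closedBall x r) ∧
        closedBall x r ⊆ U := by
      intro x hx
      have hlim := eventually_lt_of_limsup_lt (hAc x hx)
      have hde := hA x hx
      have hq1 : q < 1 := ENNReal.ofReal_lt_one.2 (by linarith)
      have h2' := hde.eventually_const_lt hq1
      have hhalf := hde.eventually_const_lt (ENNReal.inv_lt_one.2 ENNReal.one_lt_two)
      have hlt2 := hde.eventually_lt_const ENNReal.one_lt_two
      have h3r := tendsto_three_mul.eventually hlt2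
      have hUsub : ∀ᶠ r in 𝓝[>] (0:ℝ), closedBall x r ⊆ U := by
        obtain ⟨η, hη, hball⟩ := Metric.isOpen_iff.1 hUopen x (hAU hx)
        have hev : ∀ᶠ r in 𝓝[>] (0:ℝ), r < η / 2 :=
          (eventually_lt_nhds (by positivity)).filter_mono nhdsWithin_le_nhds
        exact hev.mono fun r hr =>
          (closedBall_subset_ball (by linarith)).trans hball
      filter_upwards [self_mem_nhdsWithin, hlim, h2', hhalf, h3r, hUsub] with r
        hr hlimr h2r hhr h3rr hUr
      have hr0 : (0:ℝ) < r := hr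
      have hp0 : ENNReal.ofReal (Real.pi * r ^ 2) ≠ 0 :=
        (ENNReal.ofReal_pos.2 (mul_pos Real.pi_pos (pow_pos hr0 2))).ne'
      have hpt : ENNReal.ofReal (Real.pi * r ^ 2) ≠ ∞ := ENNReal.ofReal_ne_top
      refine ⟨((ENNReal.div_lt_iff (Or.inl hp0) (Or.inl hpt)).1 hlimr).le,
        ((ENNReal.lt_div_iff_mul_lt (Or.inl hp0) (Or.inl hpt)).1 h2r).le, ?_, hUr⟩
      -- doubling at scale 3r
      have hp30 : ENNReal.ofReal (Real.pi * (3*r) ^ 2) ≠ 0 :=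
        (ENNReal.ofReal_pos.2 (mul_pos Real.pi_pos (pow_pos (by linarith) 2))).ne'
      have hp3t : ENNReal.ofReal (Real.pi * (3*r) ^ 2) ≠ ∞ := ENNReal.ofReal_ne_top
      have h18 : μH[2] (closedBall x (3*r)) < 2 * ENNReal.ofReal (Real.pi * (3*r) ^ 2) :=
        (ENNReal.div_lt_iff (Or.inl hp30) (Or.inl hp3t)).1 h3rr
      have h9 : ENNReal.ofReal (Real.pi * (3*r) ^ 2) = 9 * ENNReal.ofReal (Real.pi * r ^ 2) := by
        rw [show Real.pi * (3*r) ^ 2 = 9 * (Real.pi * r ^ 2) by ring,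
          ENNReal.ofReal_mul (by norm_num)]
        norm_num
      have hhalf' : (2:ℝ≥0∞)⁻¹ * ENNReal.ofReal (Real.pi * r ^ 2) < μH[2] (closedBall x r) :=
        (ENNReal.lt_div_iff_mul_lt (Or.inl hp0) (Or.inl hpt)).1 hhr
      have hp2 : ENNReal.ofReal (Real.pi * r ^ 2) ≤ 2 * μH[2] (closedBall x r) := by
        calc ENNReal.ofReal (Real.pi * r ^ 2)
            = 2 * (2⁻¹ * ENNReal.ofReal (Real.pi * r ^ 2)) := by
              rw [← mul_assoc, ENNReal.mul_inv_cancel two_ne_zero ENNReal.ofNat_ne_top, one_mul]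
        _ ≤ 2 * μH[2] (closedBall x r) := mul_le_mul_right hhalf'.le 2
      calc μH[2] (closedBall x (3*r)) ≤ 2 * (9 * ENNReal.ofReal (Real.pi * r ^ 2)) := by
            rw [← h9]; exact h18.le
      _ = 18 * ENNReal.ofReal (Real.pi * r ^ 2) := by rw [← mul_assoc]; norm_num
      _ ≤ 18 * (2 * μH[2] (closedBall x r)) := mul_le_mul_right hp2 18
      _ = 36 * μH[2] (closedBall x r) := by rw [← mul_assoc]; norm_num
    -- the Vitali family
    set t : Set (X × ℝ) := {p | p.1 ∈ A ∧ 0 < p.2 ∧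
        volume (f '' closedBall p.1 p.2) ≤ c * ENNReal.ofReal (Real.pi * p.2 ^ 2) ∧
        q * ENNReal.ofReal (Real.pi * p.2 ^ 2) ≤ μH[2] (closedBall p.1 p.2) ∧
        μH[2] (closedBall p.1 (3 * p.2)) ≤ 36 * μH[2] (closedBall p.1 p.2) ∧
        closedBall p.1 p.2 ⊆ U} with htdef
    obtain ⟨u, hut, hucnt, hudisj, hucov⟩ :=
      Vitali.exists_disjoint_covering_ae (μH[2] : Measure X) A t 36
        (fun p => p.2) (fun p => p.1) (fun p => closedBall p.1 p.2)
        (fun a _ => Subset.rfl)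
        (fun a ha => by simpa using ha.2.2.2.2.1)
        (fun a ha => ⟨a.1, ball_subset_interior_closedBall (mem_ball_self ha.2.1)⟩)
        (fun a _ => isClosed_closedBall)
        (fun x hx η hη => by
          have h1 : ∀ᶠ r in 𝓝[>] (0:ℝ), r ≤ η :=
            ((eventually_lt_nhds hη).filter_mono nhdsWithin_le_nhds).mono fun r hr => hr.le
          obtain ⟨r, hrP, hr0, hrη⟩ := ((hP x hx).and (eventually_mem_nhdsWithin.and h1)).exists
          exact ⟨(x, r), ⟨hx, hr0, hrP⟩, hrη, rfl⟩)
    set W : Set X := ⋃ p ∈ u, closedBall (p : X × ℝ).1 (p : X × ℝ).2 with hWdef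
    have hWU : W ⊆ U := iUnion₂_subset fun p hp => (hut hp).2.2.2.2.2
    have himg : f '' A ⊆ f '' (A \ W) ∪ ⋃ p ∈ u, f '' closedBall (p : X × ℝ).1 (p : X × ℝ).2 := by
      rintro y ⟨x, hx, rfl⟩
      by_cases hxW : x ∈ W
      · obtain ⟨p, hp, hxp⟩ := mem_iUnion₂.1 hxW
        exact Or.inr (mem_iUnion₂.2 ⟨p, hp, ⟨x, hxp, rfl⟩⟩)
      · exact Or.inl ⟨x, ⟨hx, hxW⟩, rfl⟩
    have hest : ∀ p : u, volume (f '' closedBall (p : X × ℝ).1 (p : X × ℝ).2) ≤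
        (c * q⁻¹) * μH[2] (closedBall (p : X × ℝ).1 (p : X × ℝ).2) := by
      rintro ⟨p, hp⟩
      obtain ⟨-, -, h1, h2, -, -⟩ := hut hp
      have hple : ENNReal.ofReal (Real.pi * p.2 ^ 2) ≤ q⁻¹ * μH[2] (closedBall p.1 p.2) := by
        have h3 := mul_le_mul_right h2 q⁻¹
        rwa [← mul_assoc, ENNReal.inv_mul_cancel hq0 hqt, one_mul] at h3
      calc volume (f '' closedBall p.1 p.2) ≤ c * ENNReal.ofReal (Real.pi * p.2 ^ 2) := h1
      _ ≤ c * (q⁻¹ * μH[2] (closedBall p.1 p.2)) := mul_le_mul_right hple c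
      _ = (c * q⁻¹) * μH[2] (closedBall p.1 p.2) := (mul_assoc _ _ _).symm
    calc volume (f '' A)
        ≤ volume (f '' (A \ W)) + volume (⋃ p ∈ u, f '' closedBall (p:X×ℝ).1 (p:X×ℝ).2) :=
          le_trans (measure_mono himg) (measure_union_le _ _)
    _ ≤ 0 + ∑' p : u, volume (f '' closedBall (p:X×ℝ).1 (p:X×ℝ).2) :=
          add_le_add (le_of_eq (hLusin _ hucov)) (measure_biUnion_le volume hucnt _)
    _ = ∑' p : u, volume (f '' closedBall (p:X×ℝ).1 (p:X×ℝ).2) := zero_add _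
    _ ≤ ∑' p : u, (c * q⁻¹) * μH[2] (closedBall (p:X×ℝ).1 (p:X×ℝ).2) :=
          ENNReal.tsum_le_tsum hest
    _ = (c * q⁻¹) * ∑' p : u, μH[2] (closedBall (p:X×ℝ).1 (p:X×ℝ).2) := ENNReal.tsum_mul_left
    _ = (c * q⁻¹) * μH[2] W := by
          rw [measure_biUnion hucnt hudisj fun p hp => measurableSet_closedBall]
    _ ≤ c * q⁻¹ * (μH[2] A + δ) := mul_le_mul_right (le_trans (measure_mono hWU) hUlt.le) _
  -- pass to the limit in ε and δ
  have hre : Tendsto (fun n : ℕ => 1 - 1 / ((n:ℝ) + 2)) atTop (𝓝 1) := by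
    have h1 : Tendsto (fun n : ℕ => ((n:ℝ) + 2)) atTop atTop :=
      tendsto_atTop_add_const_right atTop 2 tendsto_natCast_atTop_atTop
    have h2 := h1.inv_tendsto_atTop
    have h3 := tendsto_const_nhds.sub (f := fun _ : ℕ => (1:ℝ)) h2
    simpa [one_div] using h3
  have T1 : Tendsto (fun n : ℕ => (ENNReal.ofReal (1 - 1 / ((n:ℝ) + 2)))⁻¹) atTop (𝓝 1) := by
    have h2 : Tendsto (fun n : ℕ => ENNReal.ofReal (1 - 1 / ((n:ℝ) + 2))) atTop (𝓝 1) := by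
      have := (ENNReal.continuous_ofReal.tendsto 1).comp hre
      simpa [Function.comp_def, ENNReal.ofReal_one] using this
    have h3 := ENNReal.tendsto_inv_iff.2 h2
    simpa using h3
  have T2 : Tendsto (fun n : ℕ => μH[2] A + ((n:ℝ≥0∞) + 1)⁻¹) atTop (𝓝 (μH[2] A)) := by
    have h0 : Tendsto (fun n : ℕ => ((n:ℝ≥0∞) + 1)⁻¹) atTop (𝓝 0) := by
      have := ENNReal.tendsto_inv_nat_nhds_zero.comp (tendsto_add_atTop_nat 1)
      simpa [Function.comp_def, Nat.cast_add, Nat.cast_one] using this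
    simpa using tendsto_const_nhds.add h0
  have Tfin : Tendsto (fun n : ℕ =>
      c * (ENNReal.ofReal (1 - 1 / ((n:ℝ) + 2)))⁻¹ * (μH[2] A + ((n:ℝ≥0∞) + 1)⁻¹))
      atTop (𝓝 (c * μH[2] A)) := by
    have s1 : Tendsto (fun n : ℕ => c * (ENNReal.ofReal (1 - 1 / ((n:ℝ) + 2)))⁻¹)
        atTop (𝓝 c) := by
      simpa using ENNReal.Tendsto.const_mul T1 (Or.inl one_ne_zero)
    simpa using ENNReal.Tendsto.mul s1 (Or.inr hμA) T2 (Or.inr hc)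
  refine ge_of_tendsto' Tfin fun n => ?_
  refine key (1 / ((n:ℝ) + 2)) (by positivity) ?_ (((n:ℝ≥0∞) + 1)⁻¹) ?_ ?_
  · rw [div_lt_one (by positivity)]
    have : (0:ℝ) ≤ (n:ℝ) := Nat.cast_nonneg n
    linarith
  · exact ENNReal.inv_ne_zero.2 (ENNReal.add_ne_top.2 ⟨ENNReal.natCast_ne_top n, ENNReal.one_ne_top⟩)
  · exact ENNReal.inv_ne_top.2 (by simp)

/-- Per-piece estimate: if `A ⊆ B`, `B` measurable, and every point of `A` is a density
point, then `m₂(f(A)) ≤ ∫_B J_f dH²`. -/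
private lemma piece [SecondCountableTopology X]
    [IsLocallyFiniteMeasure (μH[2] : Measure X)]
    (f : X → EuclideanSpace ℝ (Fin 2))
    (hLusin : ∀ E : Set X, μH[2] E = 0 → volume (f '' E) = 0)
    (hJmeas : Measurable (jacobianJ f))
    (A B : Set X) (hAB : A ⊆ B) (hB : MeasurableSet B)
    (hA : ∀ x ∈ A, IsH2DensityPoint x) :
    volume (f '' A) ≤ ∫⁻ x in B, jacobianJ f x ∂(μH[2]) := by
  set J := jacobianJ f with hJdef
  -- the ∞-part
  by_cases htop : μH[2] (B ∩ J ⁻¹' {∞}) = 0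
  swap
  · -- the integral is infinite
    have hBtop : MeasurableSet (B ∩ J ⁻¹' {∞}) := hB.inter (hJmeas (measurableSet_singleton _))
    have h1 : (⊤ : ℝ≥0∞) * μH[2] (B ∩ J ⁻¹' {∞}) ≤ ∫⁻ x in B, J x ∂(μH[2]) := by
      calc (⊤ : ℝ≥0∞) * μH[2] (B ∩ J ⁻¹' {∞})
          = ∫⁻ _ in B ∩ J ⁻¹' {∞}, (⊤ : ℝ≥0∞) ∂(μH[2]) := by
            rw [setLIntegral_const]
      _ ≤ ∫⁻ x in B ∩ J ⁻¹' {∞}, J x ∂(μH[2]) := by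
            refine setLIntegral_mono hJmeas fun x hx => ?_
            rw [show J x = ⊤ from hx.2]
      _ ≤ ∫⁻ x in B, J x ∂(μH[2]) := lintegral_mono_set inter_subset_left
    rw [ENNReal.top_mul htop] at h1
    exact le_top.trans h1
  have hAinf : volume (f '' (A ∩ J ⁻¹' {∞})) = 0 :=
    hLusin _ (measure_mono_null (inter_subset_inter_left _ hAB) htop)
  -- the 0-part
  have hzero : volume (f '' (A ∩ J ⁻¹' {0})) = 0 := by
    have hcup : A ∩ J ⁻¹' {0} = ⋃ n, (A ∩ J ⁻¹' {0} ∩ spanningSets (μH[2] : Measure X) n) := by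
      rw [← inter_iUnion, iUnion_spanningSets, inter_univ]
    rw [hcup, image_iUnion]
    refine measure_iUnion_null fun n => ?_
    have hkey : ∀ k : ℕ, volume (f '' (A ∩ J ⁻¹' {0} ∩ spanningSets (μH[2] : Measure X) n)) ≤
        ((k:ℝ≥0∞) + 1)⁻¹ * μH[2] (spanningSets (μH[2] : Measure X) n) := by
      intro k
      have hk0 : ((k:ℝ≥0∞) + 1)⁻¹ ≠ 0 :=
        ENNReal.inv_ne_zero.2 (ENNReal.add_ne_top.2 ⟨ENNReal.natCast_ne_top k, ENNReal.one_ne_top⟩)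
      refine le_trans (core_cover f hLusin _ (fun x hx => hA x hx.1.1)
        (((k:ℝ≥0∞) + 1)⁻¹) (ENNReal.inv_ne_top.2 (by simp)) fun x hx => ?_)
        (mul_le_mul_right (measure_mono inter_subset_right) _)
      rw [show jacobianJ f x = 0 from hx.1.2]
      exact hk0.bot_lt
    have hT : Tendsto (fun k : ℕ => ((k:ℝ≥0∞) + 1)⁻¹ * μH[2] (spanningSets (μH[2] : Measure X) n))
        atTop (𝓝 0) := by
      have h0 : Tendsto (fun k : ℕ => ((k:ℝ≥0∞) + 1)⁻¹) atTop (𝓝 0) := by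
        have := ENNReal.tendsto_inv_nat_nhds_zero.comp (tendsto_add_atTop_nat 1)
        simpa [Function.comp_def, Nat.cast_add, Nat.cast_one] using this
      have := ENNReal.Tendsto.mul_const h0
        (Or.inr (measure_spanningSets_lt_top (μH[2] : Measure X) n).ne)
      simpa using this
    have := ge_of_tendsto' hT hkey
    exact le_antisymm (by simpa using this) zero_le
  -- main claim with factor b
  have claim : ∀ b : ℝ≥0∞, 1 < b → b ≠ ∞ →
      volume (f '' A) ≤ b * ∫⁻ x in B, J x ∂(μH[2]) := by
    intro b hb hbt
    have hb0 : b ≠ 0 := (lt_trans zero_lt_one hb).ne'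
    set Am : ℤ → Set X := fun m => A ∩ J ⁻¹' (Ico (b ^ m) (b ^ (m + 1))) with hAm
    set Bm : ℤ → Set X := fun m => B ∩ J ⁻¹' (Ico (b ^ m) (b ^ (m + 1))) with hBm
    have hBmmeas : ∀ m, MeasurableSet (Bm m) := fun m => hB.inter (hJmeas measurableSet_Ico)
    have hBmdisj : Pairwise (Function.onFun Disjoint Bm) := by
      have hIco : ∀ m m' : ℤ, m < m' →
          Disjoint (Ico (b ^ m) (b ^ (m+1))) (Ico (b ^ m') (b ^ (m'+1))) := by
        intro m m' hmm'
        refine Set.disjoint_left.2 fun x hx hx' => ?_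
        have h1 : b ^ (m+1) ≤ b ^ m' := ENNReal.zpow_le_of_le hb.le (by omega)
        exact absurd (lt_of_lt_of_le hx.2 (h1.trans hx'.1)) (lt_irrefl x)
      intro m m' hmm'
      rcases lt_or_gt_of_ne hmm' with h | h
      · exact (Disjoint.preimage J (hIco m m' h)).mono inter_subset_right inter_subset_right
      · exact ((Disjoint.preimage J (hIco m' m h)).symm).mono inter_subset_right inter_subset_right
    have hcover : f '' A ⊆ (f '' (A ∩ J ⁻¹' {0}) ∪ f '' (A ∩ J ⁻¹' {∞})) ∪
        ⋃ m : ℤ, f '' Am m := by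
      rintro y ⟨x, hx, rfl⟩
      rcases eq_or_ne (J x) 0 with h0 | h0
      · exact Or.inl (Or.inl ⟨x, ⟨hx, h0⟩, rfl⟩)
      rcases eq_or_ne (J x) ∞ with hT | hT
      · exact Or.inl (Or.inr ⟨x, ⟨hx, hT⟩, rfl⟩)
      obtain ⟨m, hm⟩ := ENNReal.exists_mem_Ico_zpow h0 hT hb hbt
      exact Or.inr (mem_iUnion.2 ⟨m, ⟨x, ⟨hx, hm⟩, rfl⟩⟩)
    calc volume (f '' A)
        ≤ (volume (f '' (A ∩ J ⁻¹' {0})) + volume (f '' (A ∩ J ⁻¹' {∞}))) +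
            ∑' m : ℤ, volume (f '' Am m) := by
          refine le_trans (measure_mono hcover) (le_trans (measure_union_le _ _) ?_)
          exact add_le_add (measure_union_le _ _) (measure_iUnion_le _)
    _ = ∑' m : ℤ, volume (f '' Am m) := by rw [hzero, hAinf, add_zero, zero_add]
    _ ≤ ∑' m : ℤ, b ^ (m + 1) * μH[2] (Bm m) := by
          refine ENNReal.tsum_le_tsum fun m => ?_
          have hAc : ∀ x ∈ Am m, J x < b ^ (m + 1) := fun x hx => hx.2.2
          refine le_trans (core_cover f hLusin _ (fun x hx => hA x hx.1) _
            (ENNReal.zpow_lt_top hb0 hbt _).ne hAc) ?_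
          exact mul_le_mul_right (measure_mono (inter_subset_inter_left _ hAB)) _
    _ = ∑' m : ℤ, b * (b ^ m * μH[2] (Bm m)) := by
          refine tsum_congr fun m => ?_
          rw [← mul_assoc, show m + 1 = 1 + m by omega, ENNReal.zpow_add hb0 hbt 1 m, zpow_one]
    _ ≤ ∑' m : ℤ, b * ∫⁻ x in Bm m, J x ∂(μH[2]) := by
          refine ENNReal.tsum_le_tsum fun m => mul_le_mul_right ?_ b
          calc b ^ m * μH[2] (Bm m) = ∫⁻ _ in Bm m, b ^ m ∂(μH[2]) := (setLIntegral_const _ _).symm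
          _ ≤ ∫⁻ x in Bm m, J x ∂(μH[2]) := setLIntegral_mono hJmeas fun x hx => hx.2.1
    _ = b * ∫⁻ x in ⋃ m : ℤ, Bm m, J x ∂(μH[2]) := by
          rw [ENNReal.tsum_mul_left, lintegral_iUnion hBmmeas hBmdisj]
    _ ≤ b * ∫⁻ x in B, J x ∂(μH[2]) :=
          mul_le_mul_right (lintegral_mono_set (iUnion_subset fun m => inter_subset_left)) b
  -- conclude by letting b → 1
  rcases eq_top_or_lt_top (∫⁻ x in B, J x ∂(μH[2])) with hI | hI
  · rw [hI]; exact le_top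
  set I := ∫⁻ x in B, J x ∂(μH[2]) with hIdef
  refine ENNReal.le_of_forall_pos_le_add fun η hη hIf => ?_
  have hI1 : I + 1 ≠ 0 := by simp
  have hI1t : I + 1 ≠ ∞ := ENNReal.add_ne_top.2 ⟨hI.ne, ENNReal.one_ne_top⟩
  set d : ℝ≥0∞ := (η : ℝ≥0∞) / (I + 1) with hddef
  have hd0 : d ≠ 0 := by
    rw [hddef]
    exact (ENNReal.div_pos (by exact_mod_cast hη.ne') hI1t).ne'
  have hdt : d ≠ ∞ := by
    rw [hddef]
    exact (ENNReal.div_lt_top ENNReal.coe_ne_top hI1).ne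
  have hb1 : (1:ℝ≥0∞) < 1 + d := ENNReal.lt_add_right ENNReal.one_ne_top hd0
  have hbt : (1:ℝ≥0∞) + d ≠ ∞ := ENNReal.add_ne_top.2 ⟨ENNReal.one_ne_top, hdt⟩
  calc volume (f '' A) ≤ (1 + d) * I := claim _ hb1 hbt
  _ = I + d * I := by rw [add_mul, one_mul]
  _ ≤ I + d * (I + 1) := add_le_add_right (mul_le_mul_right le_self_add d) I
  _ = I + η := by rw [hddef, ENNReal.div_mul_cancel hI1 hI1t]

end Aux

/-- Reverse area inequality: if `f : X → ℝ²` is continuous on a metric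
surface, satisfies Lusin's condition (N), `J_f` is Borel measurable, `f` is locally
injective outside a countable set `C`, and `F` is a Borel set `H²`-almost every point of
which is an `H²`-density point, then `∫_{ℝ²} N(y, f, F) dy ≤ ∫_F J_f dH²`. -/
theorem jacobian_area_inequality_reverse
    {X : Type*} [MetricSpace X] [MeasurableSpace X] [BorelSpace X]
    (hsurf : ∃ U : Set (EuclideanSpace ℝ (Fin 2)),
      IsOpen U ∧ IsConnected U ∧ Nonempty (X ≃ₜ U))
    (hloc : IsLocallyFiniteMeasure (μH[2] : Measure X))
    (f : X → EuclideanSpace ℝ (Fin 2)) (hf : Continuous f)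
    (hLusin : ∀ E : Set X, μH[2] E = 0 → volume (f '' E) = 0)
    (hJmeas : Measurable (jacobianJ f))
    (C : Set X) (hC : C.Countable)
    (hinj : ∀ x ∈ Cᶜ, ∃ V : Set X, IsOpen V ∧ x ∈ V ∧ Set.InjOn f V)
    (F : Set X) (hF : MeasurableSet F)
    (hdens : μH[2] {x ∈ F | ¬ IsH2DensityPoint x} = 0) :
    ∫⁻ y, multN f F y ≤ ∫⁻ x in F, jacobianJ f x ∂(μH[2]) := by
  classical
  obtain ⟨U, hUopen, -, ⟨e⟩⟩ := hsurf
  haveI : SecondCountableTopology X := e.secondCountableTopology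
  haveI := hloc
  set D : Set X := {x | IsH2DensityPoint x} with hD
  set E : Set X := F \ C with hE
  -- the bad set has null image
  have hZvol : volume (f '' ({x ∈ F | ¬ IsH2DensityPoint x} ∪ (F ∩ C))) = 0 := by
    rw [image_union]
    refine le_antisymm (le_trans (measure_union_le _ _) ?_) zero_le
    rw [hLusin _ hdens, zero_add]
    exact le_of_eq (((hC.mono inter_subset_right).image f).measure_zero _)
  have hae : ∀ᵐ y, multN f F y ≤ multN f (E ∩ D) y := by
    filter_upwards [measure_eq_zero_iff_ae_notMem.mp hZvol] with y hy
    refine ENat.toENNReal_le.2 (Set.encard_mono ?_)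
    rintro x ⟨hxF, hfx⟩
    by_cases hxC : x ∈ C
    · exact absurd ⟨x, Or.inr ⟨hxF, hxC⟩, hfx⟩ hy
    by_cases hxD : IsH2DensityPoint x
    · exact ⟨⟨⟨hxF, hxC⟩, hxD⟩, hfx⟩
    · exact absurd ⟨x, Or.inl ⟨hxF, hxD⟩, hfx⟩ hy
  refine le_trans (lintegral_mono_ae hae) ?_
  by_cases hCc : Cᶜ = (∅ : Set X)
  · have hED : E ∩ D = ∅ := by
      refine eq_empty_of_forall_notMem fun x hx => ?_
      have : x ∈ Cᶜ := hx.1.2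
      rw [hCc] at this; exact this
    have : (fun y => multN f (E ∩ D) y) = fun _ => 0 := by
      funext y; simp [multN, hED]
    rw [this, lintegral_zero]
    exact zero_le
  -- choose a countable cover of `Cᶜ` by open sets on which `f` is injective
  choose V hVopen hVmem hVinj using fun x : ↥(Cᶜ) => hinj x x.2
  obtain ⟨T, hTc, hTU⟩ := TopologicalSpace.isOpen_iUnion_countable V hVopen
  have hTne : T.Nonempty := by
    rcases nonempty_iff_ne_empty'.2 hCc with ⟨⟨x, hx⟩⟩
    by_contra h
    rw [not_nonempty_iff_eq_empty] at h
    have : x ∈ ⋃ i, V i := mem_iUnion.2 ⟨⟨x, hx⟩, hVmem _⟩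
    rw [← hTU, h] at this
    simpa using this
  obtain ⟨g, hg⟩ := hTc.exists_eq_range hTne
  set Vn : ℕ → Set X := fun n => V (g n) with hVn
  have hcov : Cᶜ ⊆ ⋃ n, Vn n := by
    intro x hx
    have h1 : x ∈ ⋃ i, V i := mem_iUnion.2 ⟨⟨x, hx⟩, hVmem _⟩
    rw [← hTU, hg] at h1
    obtain ⟨i, hi, hxi⟩ := mem_iUnion₂.1 h1
    obtain ⟨n, rfl⟩ := hi
    exact mem_iUnion.2 ⟨n, hxi⟩
  set Wn : ℕ → Set X := disjointed Vn with hWn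
  have hWmeas : ∀ n, MeasurableSet (Wn n) :=
    MeasurableSet.disjointed fun n => (hVopen _).measurableSet
  have hWdisj : Pairwise (Function.onFun Disjoint Wn) := disjoint_disjointed Vn
  have hWsub : ∀ n, Wn n ⊆ Vn n := disjointed_subset Vn
  have hEmeas : MeasurableSet E := hF.diff hC.measurableSet
  -- pointwise bound on the multiplicity function
  have hpt : ∀ y, multN f (E ∩ D) y ≤
      ∑' n, (toMeasurable volume (f '' (E ∩ D ∩ Wn n))).indicator 1 y := by
    intro y
    have hsub : {x ∈ E ∩ D | f x = y} ⊆ ⋃ n, {x ∈ E ∩ D ∩ Wn n | f x = y} := by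
      rintro x ⟨hx, hfx⟩
      have : x ∈ ⋃ n, Wn n := by
        rw [hWn, iUnion_disjointed]
        exact hcov hx.1.2
      obtain ⟨n, hn⟩ := mem_iUnion.1 this
      exact mem_iUnion.2 ⟨n, ⟨⟨hx, hn⟩, hfx⟩⟩
    have h1 : multN f (E ∩ D) y ≤ ∑' n, (({x ∈ E ∩ D ∩ Wn n | f x = y}).encard : ℝ≥0∞) := by
      have h2 : multN f (E ∩ D) y ≤ ((⋃ n, {x ∈ E ∩ D ∩ Wn n | f x = y}).encard : ℝ≥0∞) :=
        ENat.toENNReal_le.2 (Set.encard_mono hsub)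
      refine h2.trans ?_
      rw [← ENNReal.tsum_set_one]
      refine le_trans (ENNReal.tsum_iUnion_le_tsum (fun _ => (1:ℝ≥0∞)) _) ?_
      exact le_of_eq (tsum_congr fun n => ENNReal.tsum_set_one _)
    refine h1.trans (ENNReal.tsum_le_tsum fun n => ?_)
    by_cases hy : y ∈ f '' (E ∩ D ∩ Wn n)
    · have hmem : y ∈ toMeasurable volume (f '' (E ∩ D ∩ Wn n)) :=
        subset_toMeasurable _ _ hy
      rw [indicator_of_mem hmem, Pi.one_apply]
      have hone : ({x ∈ E ∩ D ∩ Wn n | f x = y}).encard ≤ 1 := by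
        refine Set.encard_le_one_iff.2 fun a b ha hb => ?_
        exact hVinj (g n) (hWsub n ha.1.2) (hWsub n hb.1.2) (ha.2.trans hb.2.symm)
      exact le_trans (ENat.toENNReal_le.2 hone) (by simp)
    · have hemp : {x ∈ E ∩ D ∩ Wn n | f x = y} = ∅ :=
        eq_empty_of_forall_notMem fun x hx => hy ⟨x, hx.1, hx.2⟩
      rw [hemp]
      simp
  refine le_trans (lintegral_mono hpt) ?_
  rw [lintegral_tsum fun n =>
    ((measurable_one.indicator (measurableSet_toMeasurable _ _)).aemeasurable)]
  have hint : ∀ n, (∫⁻ y, (toMeasurable volume (f '' (E ∩ D ∩ Wn n))).indicator 1 y) =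
      volume (f '' (E ∩ D ∩ Wn n)) := by
    intro n
    rw [lintegral_indicator (measurableSet_toMeasurable _ _)]
    simp [measure_toMeasurable]
  calc (∑' n, ∫⁻ y, (toMeasurable volume (f '' (E ∩ D ∩ Wn n))).indicator 1 y)
      = ∑' n, volume (f '' (E ∩ D ∩ Wn n)) := tsum_congr hint
  _ ≤ ∑' n, ∫⁻ x in E ∩ Wn n, jacobianJ f x ∂(μH[2]) := by
      refine ENNReal.tsum_le_tsum fun n => ?_
      refine piece f hLusin hJmeas _ _ ?_ (hEmeas.inter (hWmeas n)) ?_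
      · rintro x ⟨⟨hxE, _⟩, hxW⟩; exact ⟨hxE, hxW⟩
      · rintro x ⟨⟨_, hxD⟩, _⟩; exact hxD
  _ = ∫⁻ x in ⋃ n, (E ∩ Wn n), jacobianJ f x ∂(μH[2]) := by
      refine (lintegral_iUnion (fun n => hEmeas.inter (hWmeas n)) ?_ _).symm
      exact fun m n hmn => (hWdisj hmn).mono inter_subset_right inter_subset_right
  _ ≤ ∫⁻ x in F, jacobianJ f x ∂(μH[2]) := by
      refine lintegral_mono_set (iUnion_subset fun n => ?_)
      exact inter_subset_left.trans diff_subset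
end

section
/- Let X be a metric space, x ∈ X, R > 0, and l ≥ 1 an integer; set M = 2^l. Let K ⊂ X be a connected set containing a point a with d(a,x) ≤ R and a point b with d(b,x) ≥ MR. Then ∫_{K ∩ (B(x,MR) ∖ B(x,R))} 1/(l · d(y,x)) dH¹(y) ≥ 1/2, where B(x,r) denotes the open ball, H¹ is the 1-dimensional Hausdorff measure on X, and the integral is a lower Lebesgue integral. -/
open MeasureTheory Metric Set Filter
open scoped ENNReal NNReal Topology

/-- Logarithmic annulus estimate: if a connected set `K` in a metric
space contains a point at distance at most `R` from `x` and a point at distance at least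
`MR` from `x`, where `M = 2^l`, then
`∫_{K ∩ (B(x,MR) ∖ B(x,R))} 1/(l·d(y,x)) dH¹(y) ≥ 1/2`. -/
theorem log_annulus_estimate
    {X : Type*} [MetricSpace X] [MeasurableSpace X] [BorelSpace X]
    (x : X) (R : ℝ) (hR : 0 < R) (l : ℕ) (hl : 1 ≤ l) (M : ℝ) (hM : M = 2 ^ l)
    (K : Set X) (hK : IsConnected K)
    (a : X) (ha : a ∈ K) (had : dist a x ≤ R)
    (b : X) (hb : b ∈ K) (hbd : M * R ≤ dist b x) :
    (2 : ℝ≥0∞)⁻¹ ≤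
      ∫⁻ y in K ∩ (ball x (M * R) \ ball x R),
        ENNReal.ofReal (1 / (l * dist y x)) ∂(μH[1]) := by
  have hl0 : (0:ℝ) < l := by exact_mod_cast hl
  set f : X → ℝ := fun y => dist y x with hf
  have hlip : LipschitzWith 1 f := LipschitzWith.dist_left x
  set E : ℕ → Set X := fun k => f ⁻¹' (Ico (2^k * R) (2^(k+1) * R)) with hE
  have hEmem : ∀ k y, y ∈ E k ↔ 2^k * R ≤ dist y x ∧ dist y x < 2^(k+1) * R := by
    intro k y; simp [hE, hf, Ico]
  have hEmeas : ∀ k, MeasurableSet (E k) :=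
    fun k => (hlip.continuous.measurable) measurableSet_Ico
  set S := K ∩ (ball x (M * R) \ ball x R) with hS
  set c : ℕ → ℝ≥0∞ := fun k => ENNReal.ofReal (1 / (l * (2^(k+1) * R))) with hc
  -- each ring sits inside the annulus
  have hsub : ∀ k, k < l → E k ⊆ ball x (M * R) \ ball x R := by
    intro k hk y hy
    rw [hEmem] at hy
    constructor
    · rw [mem_ball]
      calc dist y x < 2^(k+1) * R := hy.2
        _ ≤ M * R := by
            rw [hM]
            have : (2:ℝ)^(k+1) ≤ 2^l := pow_le_pow_right₀ (by norm_num) hk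
            nlinarith
    · intro hy'
      rw [mem_ball] at hy'
      have h1 : (1:ℝ) * R ≤ 2^k * R := by
        have : (1:ℝ) ≤ 2^k := one_le_pow₀ (by norm_num)
        nlinarith
      linarith [hy.1]
  -- measure lower bound on each ring
  have hmeas_bound : ∀ k, k < l → ENNReal.ofReal (2^k * R) ≤ μH[1] (K ∩ E k) := by
    intro k hk
    have hK' : IsPreconnected (f '' K) :=
      hK.isPreconnected.image f hlip.continuous.continuousOn
    have himg : Ico (2^k * R) (2^(k+1) * R) ⊆ f '' (K ∩ E k) := by
      intro t ht
      have h1 : f a ∈ f '' K := mem_image_of_mem _ ha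
      have h2 : f b ∈ f '' K := mem_image_of_mem _ hb
      have htI : t ∈ Icc (f a) (f b) := by
        constructor
        · have : (1:ℝ) * R ≤ 2^k * R := by
            have : (1:ℝ) ≤ 2^k := one_le_pow₀ (by norm_num)
            nlinarith
          simp only [hf]; linarith [ht.1]
        · have h2l : (2:ℝ)^(k+1) ≤ 2^l := pow_le_pow_right₀ (by norm_num) hk
          have : (2:ℝ)^(k+1) * R ≤ M * R := by rw [hM]; nlinarith
          simp only [hf]; linarith [ht.2]
      obtain ⟨y, hyK, hyt⟩ := hK'.Icc_subset h1 h2 htI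
      have hyt' : dist y x = t := hyt
      exact ⟨y, ⟨hyK, by rw [hEmem, hyt']; exact ⟨ht.1, ht.2⟩⟩, hyt⟩
    have hvol : ENNReal.ofReal (2^k * R) = μH[1] (Ico (2^k * R) (2^(k+1) * R)) := by
      rw [MeasureTheory.hausdorffMeasure_real, Real.volume_Ico]
      congr 1; ring
    calc ENNReal.ofReal (2^k * R) = μH[1] (Ico (2^k * R) (2^(k+1) * R)) := hvol
      _ ≤ μH[1] (f '' (K ∩ E k)) := measure_mono himg
      _ ≤ μH[1] (K ∩ E k) := by
          simpa using hlip.hausdorffMeasure_image_le zero_le_one (K ∩ E k)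
  -- rings are pairwise disjoint
  have hdisj : ∀ j k, j ≠ k → ∀ y, y ∈ E j → y ∈ E k → False := by
    intro j k hjk y hyj hyk
    rw [hEmem] at hyj hyk
    wlog hlt : j < k generalizing j k
    · exact this k j hjk.symm hyk hyj (by omega)
    have : (2:ℝ)^(j+1) * R ≤ 2^k * R := by
      have : (2:ℝ)^(j+1) ≤ 2^k := pow_le_pow_right₀ (by norm_num) hlt
      nlinarith
    linarith [hyj.2, hyk.1]
  -- pointwise bound
  have hpt : ∀ y, (∑ k ∈ Finset.range l, (E k).indicator (fun _ => c k) y)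
      ≤ ENNReal.ofReal (1 / (l * dist y x)) := by
    intro y
    by_cases hmem : ∃ k ∈ Finset.range l, y ∈ E k
    · obtain ⟨k0, hk0, hyk0⟩ := hmem
      rw [Finset.sum_eq_single_of_mem k0 hk0 (by
        intro j _ hj
        exact Set.indicator_of_notMem (fun hyj => hdisj j k0 hj y hyj hyk0) _)]
      rw [Set.indicator_of_mem hyk0]
      apply ENNReal.ofReal_le_ofReal
      rw [hEmem] at hyk0
      have hd0 : 0 < dist y x := by
        have : (0:ℝ) < 2^k0 * R := by positivity
        linarith [hyk0.1]
      apply one_div_le_one_div_of_le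
      · positivity
      · have := hyk0.2; nlinarith
    · push_neg at hmem
      rw [Finset.sum_eq_zero (fun k hk => Set.indicator_of_notMem (hmem k hk) _)]
      exact zero_le
  -- assemble
  have key : ∀ k, k < l → ENNReal.ofReal (1 / (2 * l)) ≤
      ∫⁻ y in S, (E k).indicator (fun _ => c k) y ∂(μH[1]) := by
    intro k hk
    rw [lintegral_indicator (hEmeas k), setLIntegral_const,
      Measure.restrict_apply (hEmeas k)]
    have hES : E k ∩ S = K ∩ E k := by
      ext y
      constructor
      · rintro ⟨hy1, hy2, _⟩; exact ⟨hy2, hy1⟩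
      · rintro ⟨hy1, hy2⟩; exact ⟨hy2, hy1, hsub k hk hy2⟩
    rw [hES]
    calc ENNReal.ofReal (1 / (2 * l)) = c k * ENNReal.ofReal (2^k * R) := by
          rw [hc]
          rw [← ENNReal.ofReal_mul (by positivity)]
          congr 1
          have h1 : (0:ℝ) < l * (2^(k+1) * R) := by positivity
          field_simp
          ring
      _ ≤ c k * μH[1] (K ∩ E k) :=
          mul_le_mul_right (hmeas_bound k hk) _
  calc (2:ℝ≥0∞)⁻¹ = ∑ _k ∈ Finset.range l, ENNReal.ofReal (1 / (2 * l)) := by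
        rw [Finset.sum_const, Finset.card_range, nsmul_eq_mul,
          ← ENNReal.ofReal_natCast l, ← ENNReal.ofReal_mul (by positivity)]
        rw [show (l:ℝ) * (1 / (2 * l)) = 1/2 by field_simp]
        rw [show (1:ℝ)/2 = (2:ℝ)⁻¹ by norm_num, ENNReal.ofReal_inv_of_pos (by norm_num)]
        norm_num
    _ ≤ ∑ k ∈ Finset.range l, ∫⁻ y in S, (E k).indicator (fun _ => c k) y ∂(μH[1]) :=
        Finset.sum_le_sum (fun k hk => key k (Finset.mem_range.mp hk))
    _ = ∫⁻ y in S, ∑ k ∈ Finset.range l, (E k).indicator (fun _ => c k) y ∂(μH[1]) :=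
        (lintegral_finset_sum _ (fun k _ =>
          (measurable_const.indicator (hEmeas k)))).symm
    _ ≤ ∫⁻ y in S, ENNReal.ofReal (1 / (l * dist y x)) ∂(μH[1]) :=
        lintegral_mono hpt
end

section
/- Let X be a metric space, μ a Borel measure on X, x ∈ X, R > 0, l ≥ 1 an integer, M = 2^l, and L ≥ 1. Let g : X → [0,∞] be a function such that (i) μ(B̄(x,r)) ≤ 4r² for every 0 < r ≤ 5MR, and (ii) ∫_{B(x,r)} g dμ ≤ L · μ(B(x,5r)) for every 0 < r ≤ MR. Then ∫_{B(x,MR) ∖ B(x,R)} g(y)/(l · d(y,x))² dμ(y) ≤ 400 L / l, where B(x,r) and B̄(x,r) denote the open and closed balls and the integrals are lower Lebesgue integrals. -/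
open MeasureTheory Metric Set Filter
open scoped ENNReal NNReal Topology

/-- Dyadic-ring estimate: if `μ(B̄(x,r)) ≤ 4r²` for all `0 < r ≤ 5MR` and
the averages `∫_{B(x,r)} g dμ ≤ L · μ(B(x,5r))` for all `0 < r ≤ MR`, where `M = 2^l`, then
`∫_{B(x,MR) ∖ B(x,R)} g(y)/(l·d(y,x))² dμ(y) ≤ 400 L / l`. -/
theorem dyadic_ring_estimate
    {X : Type*} [MetricSpace X] [MeasurableSpace X] [BorelSpace X]
    (μ : Measure X) (x : X) (R : ℝ) (hR : 0 < R)
    (l : ℕ) (hl : 1 ≤ l) (M : ℝ) (hM : M = 2 ^ l)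
    (L : ℝ≥0∞) (hL : 1 ≤ L) (g : X → ℝ≥0∞)
    (hdensity : ∀ r : ℝ, 0 < r → r ≤ 5 * M * R →
      μ (closedBall x r) ≤ ENNReal.ofReal (4 * r ^ 2))
    (hmax : ∀ r : ℝ, 0 < r → r ≤ M * R →
      ∫⁻ y in ball x r, g y ∂μ ≤ L * μ (ball x (5 * r))) :
    ∫⁻ y in ball x (M * R) \ ball x R,
        g y / ENNReal.ofReal ((l * dist y x) ^ 2) ∂μ ≤ 400 * L / l := by
  classical
  have hl0 : (0:ℝ) < (l:ℝ) := by exact_mod_cast Nat.lt_of_lt_of_le Nat.zero_lt_one hl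
  set S : Set X := ball x (M * R) \ ball x R with hS
  set f : X → ℝ≥0∞ := fun y => g y / ENNReal.ofReal ((l * dist y x) ^ 2) with hf
  set A : ℕ → Set X := fun k => ball x (2 ^ (k+1) * R) \ ball x (2 ^ k * R) with hA
  -- coverage
  have hcov : S ⊆ ⋃ k, (A k ∩ S) := by
    intro y hy
    obtain ⟨hy1, hy2⟩ := hy
    rw [mem_ball] at hy1
    rw [mem_ball] at hy2
    push_neg at hy2
    have hex : ∃ k, dist y x < 2 ^ (k+1) * R := by
      refine ⟨l - 1, ?_⟩
      have : l - 1 + 1 = l := Nat.succ_pred_eq_of_pos hl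
      rw [this]
      simpa [hM] using hy1
    set k := Nat.find hex with hk
    have hk1 : dist y x < 2 ^ (k+1) * R := Nat.find_spec hex
    have hk2 : 2 ^ k * R ≤ dist y x := by
      rcases Nat.eq_zero_or_pos k with h0 | h0
      · simpa [h0] using hy2
      · have := Nat.find_min hex (m := k - 1) (Nat.pred_lt h0.ne')
        push_neg at this
        have hkk : k - 1 + 1 = k := Nat.succ_pred_eq_of_pos h0
        rwa [hkk] at this
    exact mem_iUnion.mpr ⟨k, ⟨⟨mem_ball.mpr hk1, fun h => absurd (mem_ball.mp h) (not_lt.mpr hk2)⟩,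
      ⟨mem_ball.mpr hy1, fun h => absurd (mem_ball.mp h) (not_lt.mpr hy2)⟩⟩⟩
  -- rings beyond l are disjoint from S
  have hempty : ∀ k, l ≤ k → A k ∩ S = ∅ := by
    intro k hk
    apply eq_empty_iff_forall_notMem.mpr
    rintro y ⟨⟨-, hy2⟩, hy3, -⟩
    rw [mem_ball] at hy3
    have hle : M * R ≤ 2 ^ k * R := by
      rw [hM]
      exact mul_le_mul_of_nonneg_right (pow_le_pow_right₀ one_le_two hk) hR.le
    exact hy2 (mem_ball.mpr (lt_of_lt_of_le hy3 hle))
  have hAm : ∀ k, MeasurableSet (A k) := fun k =>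
    measurableSet_ball.diff measurableSet_ball
  -- per-ring bound
  have hring : ∀ k < l, ∫⁻ y in A k ∩ S, f y ∂μ ≤ L * ENNReal.ofReal (400 / (l:ℝ)^2) := by
    intro k hkl
    set c : ℝ≥0∞ := ENNReal.ofReal ((l * (2 ^ k * R)) ^ 2) with hc
    have hcpos : (0:ℝ) < (l * (2 ^ k * R)) ^ 2 := by positivity
    have hc0 : c ≠ 0 := (ENNReal.ofReal_pos.mpr hcpos).ne'
    have hcinv : c⁻¹ ≠ ⊤ := ENNReal.inv_ne_top.mpr hc0
    have hrpos : (0:ℝ) < 2 ^ (k+1) * R := by positivity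
    have hrle : 2 ^ (k+1) * R ≤ M * R := by
      rw [hM]
      exact mul_le_mul_of_nonneg_right (pow_le_pow_right₀ one_le_two hkl) hR.le
    calc ∫⁻ y in A k ∩ S, f y ∂μ
        ≤ ∫⁻ y in A k, f y ∂μ :=
          lintegral_mono' (Measure.restrict_mono inter_subset_left le_rfl) le_rfl
      _ ≤ ∫⁻ y in A k, g y * c⁻¹ ∂μ := by
          apply setLIntegral_mono' (hAm k)
          intro y hy
          have hd : 2 ^ k * R ≤ dist y x := not_lt.mp (fun h => hy.2 (mem_ball.mpr h))
          rw [hf]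
          simp only [div_eq_mul_inv]
          refine mul_le_mul_right (ENNReal.inv_le_inv.mpr (ENNReal.ofReal_le_ofReal ?_)) _
          have h1 : (0:ℝ) ≤ l * (2 ^ k * R) := by positivity
          gcongr
      _ = (∫⁻ y in A k, g y ∂μ) * c⁻¹ := lintegral_mul_const' _ _ hcinv
      _ ≤ (∫⁻ y in ball x (2 ^ (k+1) * R), g y ∂μ) * c⁻¹ :=
          mul_le_mul_left (lintegral_mono' (Measure.restrict_mono diff_subset le_rfl) le_rfl) _
      _ ≤ (L * μ (ball x (5 * (2 ^ (k+1) * R)))) * c⁻¹ :=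
          mul_le_mul_left (hmax _ hrpos hrle) _
      _ ≤ (L * ENNReal.ofReal (4 * (5 * (2 ^ (k+1) * R)) ^ 2)) * c⁻¹ := by
          refine mul_le_mul_left (mul_le_mul_right ?_ _) _
          refine le_trans (measure_mono ball_subset_closedBall) (hdensity _ (by positivity) ?_)
          rw [mul_comm 5 M] at *
          nlinarith [hrle]
      _ = L * (ENNReal.ofReal (4 * (5 * (2 ^ (k+1) * R)) ^ 2) / c) := by
          rw [mul_assoc, div_eq_mul_inv]
      _ = L * ENNReal.ofReal (400 / (l:ℝ)^2) := by
          rw [hc, ← ENNReal.ofReal_div_of_pos hcpos]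
          congr 1
          rw [show (4 * (5 * (2 ^ (k+1) * R)) ^ 2) / ((l * (2 ^ k * R)) ^ 2)
              = 400 / (l:ℝ)^2 by rw [pow_succ]; field_simp; ring]
  -- sum up
  have hl0' : ((l:ℝ≥0∞)) ≠ 0 := Nat.cast_ne_zero.mpr (by omega)
  have hlt : ((l:ℝ≥0∞)) ≠ ⊤ := ENNReal.natCast_ne_top l
  calc ∫⁻ y in S, f y ∂μ
      ≤ ∫⁻ y in ⋃ k, (A k ∩ S), f y ∂μ :=
        lintegral_mono' (Measure.restrict_mono hcov le_rfl) le_rfl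
    _ ≤ ∑' k, ∫⁻ y in A k ∩ S, f y ∂μ := lintegral_iUnion_le _ _
    _ = ∑ k ∈ Finset.range l, ∫⁻ y in A k ∩ S, f y ∂μ := by
        refine tsum_eq_sum (fun k hk => ?_)
        rw [hempty k (le_of_not_gt (fun h => hk (Finset.mem_range.mpr h)))]
        simp
    _ ≤ ∑ k ∈ Finset.range l, L * ENNReal.ofReal (400 / (l:ℝ)^2) :=
        Finset.sum_le_sum (fun k hk => hring k (Finset.mem_range.mp hk))
    _ = (l:ℝ≥0∞) * (L * ENNReal.ofReal (400 / (l:ℝ)^2)) := by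
        rw [Finset.sum_const, Finset.card_range, nsmul_eq_mul]
    _ = 400 * L / l := by
        rw [ENNReal.eq_div_iff hl0' hlt]
        have h1 : (l:ℝ≥0∞) * ((l:ℝ≥0∞) * (L * ENNReal.ofReal (400/(l:ℝ)^2)))
            = L * ((l:ℝ≥0∞) * (l:ℝ≥0∞) * ENNReal.ofReal (400/(l:ℝ)^2)) := by ring
        rw [h1]
        have h2 : (l:ℝ≥0∞) * (l:ℝ≥0∞) * ENNReal.ofReal (400/(l:ℝ)^2) = 400 := by
          rw [← ENNReal.ofReal_natCast l, ← ENNReal.ofReal_mul (by positivity),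
            ← ENNReal.ofReal_mul (by positivity)]
          rw [show (l:ℝ) * (l:ℝ) * (400/(l:ℝ)^2) = 400 by field_simp]
          norm_num
        rw [h2, mul_comm]
end
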